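/- arXiv:1511.01705 — 6 statements merged into one kernel-verified Lean document; each statement's English description precedes it below -/
import Mathlib

section
/- Let q ≥ 2 be an integer and let f : 𝔽₂ⁿ → ℤ_q be a regular gbent function with dual f*. Then f* is also a gbent function (in fact regular), and the dual of f* is f, i.e. (f*)* = f. -/
open scoped BigOperators

/-- `ζ_q = e^{2πi/q}`. -/
noncomputable def zeta (q : ℕ) : ℂ := Complex.exp (2 * Real.pi * Complex.I / q)

/-- The standard inner product `⟨u,x⟩ = Σᵢ uᵢxᵢ` on `𝔽₂ⁿ`. -/
def ip {n : ℕ} (u x : Fin n → ZMod 2) : ZMod 2 := ∑ i, u i * x i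

/-- The generalized Walsh–Hadamard transform
`H_f(u) = Σ_x ζ_q^{f(x)} (−1)^{⟨u,x⟩}` of `f : 𝔽₂ⁿ → ℤ_q`. -/
noncomputable def gWHT {n q : ℕ} (f : (Fin n → ZMod 2) → ZMod q) (u : Fin n → ZMod 2) : ℂ :=
  ∑ x : Fin n → ZMod 2, zeta q ^ (f x).val * (-1 : ℂ) ^ (ip u x).val

/-- `f` is gbent if `|H_f(u)| = 2^{n/2}` for all `u`. -/
def IsGbent {n q : ℕ} (f : (Fin n → ZMod 2) → ZMod q) : Prop :=
  ∀ u, ‖gWHT f u‖ = (2 : ℝ) ^ ((n : ℝ) / 2)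

/-- `g` is the dual of `f`: `H_f(u) = 2^{n/2} ζ_q^{g(u)}` for all `u`. -/
def IsDualOf {n q : ℕ} (g f : (Fin n → ZMod 2) → ZMod q) : Prop :=
  ∀ u, gWHT f u = ((2 : ℝ) ^ ((n : ℝ) / 2) : ℝ) * zeta q ^ (g u).val

/-- `f` is a regular gbent function:
`H_f(u) = 2^{n/2} ζ_q^{j_u}` for some `j_u ∈ ℤ_q`, for every `u`. -/
def IsRegularGbent {n q : ℕ} (f : (Fin n → ZMod 2) → ZMod q) : Prop :=
  IsGbent f ∧ ∀ u, ∃ j : ZMod q, gWHT f u = ((2 : ℝ) ^ ((n : ℝ) / 2) : ℝ) * zeta q ^ j.val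

/-- The orthogonal complement of a subspace `U ⊆ 𝔽₂ⁿ` w.r.t. `⟨·,·⟩`. -/
def orthComp {n : ℕ} (U : Submodule (ZMod 2) (Fin n → ZMod 2)) : Set (Fin n → ZMod 2) :=
  {u | ∀ x ∈ U, ip u x = 0}

/-- `F : 𝔽₂ⁿ → ℤ_q^m` is vectorial gbent if every component function
`c·F`, `c ≠ 0`, is gbent. -/
def IsVectorialGbent {n q m : ℕ} (F : (Fin n → ZMod 2) → Fin m → ZMod q) : Prop :=
  ∀ c : Fin m → ZMod q, c ≠ 0 → IsGbent (fun x => ∑ j, c j * F x j)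

lemma neg_one_pow_mod_two (m : ℕ) : ((-1:ℂ))^(m % 2) = (-1:ℂ)^m := by
  conv_rhs => rw [← Nat.div_add_mod m 2]
  rw [pow_add, pow_mul, neg_one_sq, one_pow, one_mul]

lemma neg_one_pow_val_add (a b : ZMod 2) :
    ((-1:ℂ))^(a+b).val = (-1:ℂ)^a.val * (-1:ℂ)^b.val := by
  rw [ZMod.val_add, neg_one_pow_mod_two, pow_add]

lemma neg_one_pow_val_succ (a : ZMod 2) :
    ((-1:ℂ))^(a+1).val = -((-1:ℂ)^a.val) := by
  rw [neg_one_pow_val_add]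
  have : ((1:ZMod 2)).val = 1 := rfl
  rw [this]; ring

lemma ip_comm {n : ℕ} (u x : Fin n → ZMod 2) : ip u x = ip x u := by
  simp [ip, mul_comm]

lemma ip_add_right {n : ℕ} (x y u : Fin n → ZMod 2) :
    ip x (y + u) = ip x y + ip x u := by
  simp [ip, mul_add, Finset.sum_add_distrib]

lemma ip_add_left {n : ℕ} (x y u : Fin n → ZMod 2) :
    ip (x + y) u = ip x u + ip y u := by
  simp [ip, add_mul, Finset.sum_add_distrib]

lemma ip_single {n : ℕ} (i : Fin n) (v : Fin n → ZMod 2) :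
    ip (Pi.single i 1) v = v i := by
  simp [ip, Pi.single_apply, Finset.sum_ite_eq]

lemma abs_zeta (q : ℕ) : ‖zeta q‖ = 1 := by
  rw [zeta, Complex.norm_exp]
  have : (2 * ↑Real.pi * Complex.I / (q:ℂ)).re = 0 := by
    simp [Complex.div_re, Complex.mul_re, Complex.mul_im]
  rw [this, Real.exp_zero]

lemma char_sum {n : ℕ} (v : Fin n → ZMod 2) :
    ∑ x : Fin n → ZMod 2, ((-1:ℂ))^(ip x v).val
      = if v = 0 then (2:ℂ)^n else 0 := by
  by_cases hv : v = 0
  · subst hv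
    simp [ip, Finset.card_univ]
  · simp only [if_neg hv]
    obtain ⟨i, hi⟩ : ∃ i, v i ≠ 0 := by
      by_contra h; push_neg at h; exact hv (funext h)
    have hvi : v i = 1 := by
      have h2 : ∀ a : ZMod 2, a ≠ 0 → a = 1 := by decide
      exact h2 _ hi
    apply Finset.sum_ninvolution (fun x => x + Pi.single i 1)
    · intro a
      rw [ip_add_left, ip_single, hvi, neg_one_pow_val_succ]
      ring
    · intro a _ h
      have := congrFun h i
      simp at this
    · intro a; exact Finset.mem_univ _
    · intro a
      funext j
      simp only [Pi.add_apply, add_assoc]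
      rw [CharTwo.add_self_eq_zero, add_zero]

/-- if `f` is a regular gbent function with dual `f*`, then `f*` is
also a (regular) gbent function and `(f*)* = f`. -/
theorem stmt1 (n q : ℕ) (hq : 2 ≤ q) (f fstar : (Fin n → ZMod 2) → ZMod q)
    (hf : IsGbent f) (hdual : IsDualOf fstar f) :
    IsRegularGbent fstar ∧ IsDualOf f fstar := by
  have hCpos : (0:ℝ) < (2:ℝ)^((n:ℝ)/2) := Real.rpow_pos_of_pos two_pos _
  set C : ℂ := (((2:ℝ)^((n:ℝ)/2) : ℝ) : ℂ) with hCdef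
  have hC0 : C ≠ 0 := by
    rw [hCdef]
    exact_mod_cast hCpos.ne'
  have hCC : C * C = (2:ℂ)^n := by
    rw [hCdef, ← Complex.ofReal_mul, ← Real.rpow_add two_pos]
    have h2 : (n:ℝ)/2 + (n:ℝ)/2 = (n:ℝ) := by ring
    rw [h2, Real.rpow_natCast]
    push_cast
    ring
  have key : ∀ u, gWHT fstar u = C * zeta q ^ (f u).val := by
    intro u
    have hz : ∀ x, zeta q ^ (fstar x).val = gWHT f x * C⁻¹ := by
      intro x
      rw [hdual x]
      field_simp
      rw [hCdef]
    have huu : u + u = 0 := by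
      funext j
      exact CharTwo.add_self_eq_zero _
    calc gWHT fstar u
        = ∑ x : Fin n → ZMod 2, zeta q ^ (fstar x).val * (-1:ℂ)^(ip u x).val := rfl
      _ = ∑ x : Fin n → ZMod 2, (gWHT f x * C⁻¹) * (-1:ℂ)^(ip u x).val :=
          Finset.sum_congr rfl fun x _ => by rw [hz x]
      _ = C⁻¹ * ∑ x : Fin n → ZMod 2, gWHT f x * (-1:ℂ)^(ip u x).val := by
          rw [Finset.mul_sum]
          exact Finset.sum_congr rfl fun x _ => by ring
      _ = C⁻¹ * ∑ x : Fin n → ZMod 2, ∑ y : Fin n → ZMod 2,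
            zeta q ^ (f y).val * (-1:ℂ)^(ip x y).val * (-1:ℂ)^(ip u x).val := by
          congr 1
          refine Finset.sum_congr rfl fun x _ => ?_
          rw [gWHT, Finset.sum_mul]
      _ = C⁻¹ * ∑ y : Fin n → ZMod 2,
            zeta q ^ (f y).val * ∑ x : Fin n → ZMod 2, (-1:ℂ)^(ip x (y+u)).val := by
          congr 1
          rw [Finset.sum_comm]
          refine Finset.sum_congr rfl fun y _ => ?_
          rw [Finset.mul_sum]
          refine Finset.sum_congr rfl fun x _ => ?_
          rw [ip_add_right, neg_one_pow_val_add, ip_comm u x]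
          ring
      _ = C⁻¹ * ∑ y : Fin n → ZMod 2,
            zeta q ^ (f y).val * (if y = u then (2:ℂ)^n else 0) := by
          congr 1
          refine Finset.sum_congr rfl fun y _ => ?_
          rw [char_sum]
          congr 1
          have : (y + u = 0) ↔ (y = u) := by
            constructor
            · intro h
              have h2 : y + u + u = 0 + u := by rw [h]
              rwa [add_assoc, huu, add_zero, zero_add] at h2
            · intro h; subst h; exact huu
          simp [this]
      _ = C⁻¹ * (zeta q ^ (f u).val * (2:ℂ)^n) := by
          congr 1
          simp [mul_ite, Finset.sum_ite_eq]
      _ = C * zeta q ^ (f u).val := by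
          rw [← hCC]
          field_simp
  refine ⟨⟨?_, ?_⟩, key⟩
  · intro u
    rw [key u, norm_mul, norm_pow, abs_zeta, one_pow, mul_one, hCdef,
      Complex.norm_of_nonneg hCpos.le]
  · intro u
    exact ⟨f u, key u⟩
end

section
/- Let q ≥ 2, n = 2m, and let U₀, U₁, …, U_{2^m} be a spread of 𝔽₂ⁿ. Let k₀, k₁, …, k_{2^m}, r be elements of {0, 1, …, q−1} satisfying Σ_{i=0}^{2^m} ζ_q^{k_i} = ζ_q^{r}, and define f : 𝔽₂ⁿ → ℤ_q by f(x) = k_i if x ∈ U_i and x ≠ 0, and f(0) = r. Then f is a regular gbent function; explicitly, H_f(0) = 2^{n/2} ζ_q^{r}, and for every nonzero u ∈ 𝔽₂ⁿ one has H_f(u) = 2^{n/2} ζ_q^{k_t}, where t is the unique index with u ∈ U_t^⊥. Consequently the dual f* of f is given by f*(x) = k_i if x ∈ U_i^⊥ and x ≠ 0, and f*(0) = r. -/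
open scoped BigOperators

namespace Stmt2Aux

open Module Finset

variable {N : ℕ}

lemma ip_comm (u x : Fin N → ZMod 2) : ip u x = ip x u := by
  simp [ip, mul_comm]

lemma ip_add_right (u x y : Fin N → ZMod 2) : ip u (x + y) = ip u x + ip u y := by
  simp [ip, mul_add, Finset.sum_add_distrib]

lemma ip_add_left (u v x : Fin N → ZMod 2) : ip (u + v) x = ip u x + ip v x := by
  simp [ip, add_mul, Finset.sum_add_distrib]

lemma ip_zero_right (u : Fin N → ZMod 2) : ip u 0 = 0 := by simp [ip]

lemma ip_zero_left (x : Fin N → ZMod 2) : ip 0 x = 0 := by simp [ip]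

lemma ip_smul_left (c : ZMod 2) (u x : Fin N → ZMod 2) : ip (c • u) x = c * ip u x := by
  simp [ip, Finset.mul_sum, mul_assoc]

lemma ip_smul_right (c : ZMod 2) (u x : Fin N → ZMod 2) : ip u (c • x) = c * ip u x := by
  simp [ip, Finset.mul_sum]; congr 1; ext i; ring

lemma ip_single (u : Fin N → ZMod 2) (j : Fin N) : ip u (Pi.single j 1) = u j := by
  simp [ip, Pi.single_apply, Finset.sum_ite_eq']

noncomputable def B (N : ℕ) : LinearMap.BilinForm (ZMod 2) (Fin N → ZMod 2) :=
  LinearMap.mk₂ (ZMod 2) ip ip_add_left ip_smul_left ip_add_right ip_smul_right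

@[simp] lemma B_apply (u x : Fin N → ZMod 2) : B N u x = ip u x := rfl

lemma B_nondeg : (B N).Nondegenerate := by
  refine ⟨fun u hu => ?_, fun u hu => ?_⟩
  · funext j
    have := hu (Pi.single j 1)
    rw [B_apply, ip_single] at this
    simpa using this
  · funext j
    have := hu (Pi.single j 1)
    rw [B_apply, ip_comm, ip_single] at this
    simpa using this

lemma B_refl : (B N).IsRefl := by
  intro u x h
  rwa [B_apply, ip_comm] at h

lemma mem_orthComp_iff (W : Submodule (ZMod 2) (Fin N → ZMod 2)) (u : Fin N → ZMod 2) :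
    u ∈ orthComp W ↔ u ∈ (B N).orthogonal W := by
  rw [LinearMap.BilinForm.mem_orthogonal_iff]
  constructor
  · intro h x hx
    rw [B_apply, ip_comm]
    exact h x hx
  · intro h x hx
    have := h x hx
    rw [B_apply, ip_comm] at this
    exact this

lemma card_filter_mem (W : Submodule (ZMod 2) (Fin N → ZMod 2))
    [DecidablePred (· ∈ W)] :
    (univ.filter (· ∈ W)).card = 2 ^ (finrank (ZMod 2) W) := by
  rw [← Fintype.card_subtype]
  have : Fintype.card (ZMod 2) = 2 := by simp
  rw [card_eq_pow_finrank (K := ZMod 2) (V := W), this]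

lemma cover (m : ℕ) (W : Fin (2 ^ m + 1) → Submodule (ZMod 2) (Fin (2 * m) → ZMod 2))
    (hd : ∀ i, finrank (ZMod 2) (W i) = m)
    (hi : ∀ i j, i ≠ j → W i ⊓ W j = ⊥)
    (x : Fin (2 * m) → ZMod 2) (hx : x ≠ 0) : ∃ i, x ∈ W i := by
  classical
  set S : Fin (2 ^ m + 1) → Finset (Fin (2 * m) → ZMod 2) :=
    fun i => (univ.filter (· ∈ W i)).erase 0 with hS
  have hcard : ∀ i, (S i).card = 2 ^ m - 1 := by
    intro i
    rw [hS, Finset.card_erase_of_mem (by simp [Submodule.zero_mem]), card_filter_mem, hd]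
  have hdisj : ∀ i ∈ (univ : Finset (Fin (2 ^ m + 1))), ∀ j ∈ univ, i ≠ j →
      Disjoint (S i) (S j) := by
    intro i _ j _ hij
    rw [Finset.disjoint_left]
    intro a ha ha'
    simp only [hS, Finset.mem_erase, Finset.mem_filter] at ha ha'
    have : a ∈ W i ⊓ W j := ⟨ha.2.2, ha'.2.2⟩
    rw [hi i j hij] at this
    exact ha.1 (by simpa using this)
  have hsub : univ.biUnion S ⊆ univ.erase 0 := by
    intro a ha
    simp only [Finset.mem_biUnion, hS, Finset.mem_erase, Finset.mem_filter] at ha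
    obtain ⟨i, _, ha⟩ := ha
    simp [ha.1]
  have hc1 : (univ.biUnion S).card = (2 ^ m + 1) * (2 ^ m - 1) := by
    rw [Finset.card_biUnion hdisj]
    simp [hcard, Finset.sum_const, mul_comm]
  have hc2 : (univ.erase (0 : Fin (2 * m) → ZMod 2)).card = 2 ^ (2 * m) - 1 := by
    rw [Finset.card_erase_of_mem (Finset.mem_univ _), Finset.card_univ]
    congr 1
    simp [ZMod.card]
  have harith : (2 ^ m + 1) * (2 ^ m - 1) = 2 ^ (2 * m) - 1 := by
    have h1 : (1 : ℕ) ≤ 2 ^ m := Nat.one_le_two_pow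
    have h2 : 2 ^ (2 * m) = 2 ^ m * 2 ^ m := by rw [two_mul, pow_add]
    obtain ⟨b, hb⟩ : ∃ b, 2 ^ m = b + 1 := ⟨2 ^ m - 1, by omega⟩
    rw [h2, hb]
    simp only [Nat.add_sub_cancel]
    have e1 : (b + 1 + 1) * b = b * b + 2 * b := by ring
    have e2 : (b + 1) * (b + 1) = b * b + 2 * b + 1 := by ring
    omega
  have heq : univ.biUnion S = univ.erase 0 := by
    apply Finset.eq_of_subset_of_card_le hsub
    rw [hc1, hc2, harith]
  have : x ∈ univ.biUnion S := by
    rw [heq]; simp [hx]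
  simp only [Finset.mem_biUnion, hS, Finset.mem_erase, Finset.mem_filter] at this
  obtain ⟨i, _, hi'⟩ := this
  exact ⟨i, hi'.2.2⟩

lemma zmod2_cases : ∀ a : ZMod 2, a = 0 ∨ a = 1 := by decide

lemma neg_one_pow_add_one (a : ZMod 2) : (-1 : ℂ) ^ ((a + 1).val) = -(-1 : ℂ) ^ a.val := by
  have h01 : ((0 : ZMod 2) + 1).val = 1 := by decide
  have h11 : ((1 : ZMod 2) + 1).val = 0 := by decide
  have h0 : (0 : ZMod 2).val = 0 := by decide
  have h1 : (1 : ZMod 2).val = 1 := by decide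
  rcases zmod2_cases a with rfl | rfl <;> simp [h01, h11, h0, h1]

lemma add_self_zmod2 (y : Fin N → ZMod 2) : y + y = 0 := by
  funext i
  rcases zmod2_cases (y i) with h | h <;> simp [h]
  decide

lemma sum_char (W : Submodule (ZMod 2) (Fin N → ZMod 2)) [DecidablePred (· ∈ W)]
    (u : Fin N → ZMod 2) :
    ∑ x ∈ univ.filter (· ∈ W), (-1 : ℂ) ^ (ip u x).val =
      if (∀ x ∈ W, ip u x = 0) then ((univ.filter (· ∈ W)).card : ℂ) else 0 := by
  classical
  split_ifs with h
  · rw [Finset.sum_congr rfl (fun x hx => by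
      rw [h x (by simpa using hx), ZMod.val_zero, pow_zero])]
    simp
  · push_neg at h
    obtain ⟨x0, hx0W, hx0⟩ := h
    have hx0' : ip u x0 = 1 := by
      rcases zmod2_cases (ip u x0) with h' | h'
      · exact absurd h' hx0
      · exact h'
    set S := ∑ x ∈ univ.filter (· ∈ W), (-1 : ℂ) ^ (ip u x).val with hSdef
    have key2 : S = ∑ x ∈ univ.filter (· ∈ W), -((-1 : ℂ) ^ (ip u x).val) := by
      rw [hSdef]
      apply Finset.sum_nbij' (fun x => x + x0) (fun x => x + x0)
      · intro a ha
        simp only [Finset.mem_filter, Finset.mem_univ, true_and] at ha ⊢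
        exact W.add_mem ha hx0W
      · intro a ha
        simp only [Finset.mem_filter, Finset.mem_univ, true_and] at ha ⊢
        exact W.add_mem ha hx0W
      · intro a _
        rw [add_assoc, add_self_zmod2, add_zero]
      · intro a _
        rw [add_assoc, add_self_zmod2, add_zero]
      · intro a _
        have : ip u (a + x0) = ip u a + 1 := by
          rw [ip_add_right, hx0']
        rw [this, neg_one_pow_add_one, neg_neg]
    have key : S = -S := by
      nth_rewrite 1 [key2]
      rw [Finset.sum_neg_distrib]
    have hsum0 : S + S = 0 := by nth_rewrite 1 [key]; ring
    have h2 : (2 : ℂ) * S = 0 := by linear_combination hsum0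
    rcases mul_eq_zero.mp h2 with h' | h'
    · norm_num at h'
    · exact h'

end Stmt2Aux

open Module Finset in
/-- the spread construction (generalized Dillon class) gives regular
gbent functions, with explicit Walsh–Hadamard values and explicit dual. -/
theorem stmt2 (m q : ℕ) (hq : 2 ≤ q) (hm : 0 < m)
    (U : Fin (2 ^ m + 1) → Submodule (ZMod 2) (Fin (2 * m) → ZMod 2))
    (hdim : ∀ i, Module.finrank (ZMod 2) (U i) = m)
    (hint : ∀ i j, i ≠ j → U i ⊓ U j = ⊥)
    (k : Fin (2 ^ m + 1) → ZMod q) (r : ZMod q)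
    (hsum : ∑ i, zeta q ^ (k i).val = zeta q ^ r.val)
    (f : (Fin (2 * m) → ZMod 2) → ZMod q)
    (hf0 : f 0 = r)
    (hf : ∀ i, ∀ x ∈ U i, x ≠ 0 → f x = k i) :
    IsRegularGbent f ∧
    gWHT f 0 = (2 : ℂ) ^ m * zeta q ^ r.val ∧
    (∀ u : Fin (2 * m) → ZMod 2, u ≠ 0 →
      (∃! t, u ∈ orthComp (U t)) ∧
      ∀ t, u ∈ orthComp (U t) → gWHT f u = (2 : ℂ) ^ m * zeta q ^ (k t).val) ∧
    (∀ g : (Fin (2 * m) → ZMod 2) → ZMod q, g 0 = r →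
      (∀ i, ∀ x ∈ orthComp (U i), x ≠ 0 → g x = k i) → IsDualOf g f) := by
  classical
  have hfinV : finrank (ZMod 2) (Fin (2 * m) → ZMod 2) = 2 * m := by
    simp [Module.finrank_pi]
  have horthdim : ∀ i, finrank (ZMod 2) ((Stmt2Aux.B (2 * m)).orthogonal (U i)) = m := by
    intro i
    rw [LinearMap.BilinForm.finrank_orthogonal Stmt2Aux.B_nondeg (U i), hfinV, hdim]
    omega
  have horthint : ∀ i j, i ≠ j →
      (Stmt2Aux.B (2 * m)).orthogonal (U i) ⊓ (Stmt2Aux.B (2 * m)).orthogonal (U j) = ⊥ := by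
    intro i j hij
    have hsup : U i ⊔ U j = ⊤ := by
      apply Submodule.eq_top_of_finrank_eq
      have h1 := Submodule.finrank_sup_add_finrank_inf_eq (U i) (U j)
      rw [hint i j hij] at h1
      simp only [finrank_bot, add_zero, hdim] at h1
      rw [h1, hfinV]
      ring
    rw [eq_bot_iff]
    intro u hu
    rw [Submodule.mem_inf] at hu
    have hz : ∀ x, ip x u = 0 := by
      intro x
      have hx : x ∈ U i ⊔ U j := by rw [hsup]; trivial
      obtain ⟨a, ha, b, hb, rfl⟩ := Submodule.mem_sup.mp hx
      have h1 := LinearMap.BilinForm.mem_orthogonal_iff.mp hu.1 a ha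
      have h2 := LinearMap.BilinForm.mem_orthogonal_iff.mp hu.2 b hb
      rw [Stmt2Aux.B_apply] at h1 h2
      rw [Stmt2Aux.ip_add_left, h1, h2, add_zero]
    have := Stmt2Aux.B_nondeg.1 u (fun x => by
      rw [Stmt2Aux.B_apply, Stmt2Aux.ip_comm]; exact hz x)
    simpa using this
  have hex : ∀ u : Fin (2 * m) → ZMod 2, u ≠ 0 → ∃! t, u ∈ orthComp (U t) := by
    intro u hu
    obtain ⟨t, ht⟩ := Stmt2Aux.cover m (fun i => (Stmt2Aux.B (2 * m)).orthogonal (U i))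
      horthdim horthint u hu
    refine ⟨t, (Stmt2Aux.mem_orthComp_iff _ u).mpr ht, ?_⟩
    intro j hj
    by_contra hne
    have hmem : u ∈ (Stmt2Aux.B (2 * m)).orthogonal (U j) ⊓ (Stmt2Aux.B (2 * m)).orthogonal (U t) :=
      Submodule.mem_inf.mpr ⟨(Stmt2Aux.mem_orthComp_iff _ u).mp hj, ht⟩
    rw [horthint j t hne] at hmem
    exact hu (by simpa using hmem)
  have hcore : ∀ u, gWHT f u = zeta q ^ r.val +
      ∑ i, zeta q ^ (k i).val * ((if u ∈ orthComp (U i) then ((2 : ℂ) ^ m) else 0) - 1) := by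
    intro u
    have hcover : (univ.erase (0 : Fin (2 * m) → ZMod 2)) =
        univ.biUnion (fun i => (univ.filter (· ∈ U i)).erase 0) := by
      apply Finset.Subset.antisymm
      · intro x hx
        rw [Finset.mem_erase] at hx
        obtain ⟨i, hi'⟩ := Stmt2Aux.cover m U hdim hint x hx.1
        simp only [Finset.mem_biUnion]
        exact ⟨i, Finset.mem_univ i, by simp [Finset.mem_erase, hx.1, hi']⟩
      · intro x hx
        simp only [Finset.mem_biUnion, Finset.mem_erase, Finset.mem_filter] at hx
        obtain ⟨i, _, hx⟩ := hx
        simp [hx.1]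
    have hdisj : ∀ i ∈ (univ : Finset (Fin (2 ^ m + 1))), ∀ j ∈ univ, i ≠ j →
        Disjoint ((univ.filter (· ∈ U i)).erase 0) ((univ.filter (· ∈ U j)).erase 0) := by
      intro i _ j _ hij
      rw [Finset.disjoint_left]
      intro a ha ha'
      simp only [Finset.mem_erase, Finset.mem_filter] at ha ha'
      have : a ∈ U i ⊓ U j := ⟨ha.2.2, ha'.2.2⟩
      rw [hint i j hij] at this
      exact ha.1 (by simpa using this)
    have hterm0 : zeta q ^ (f 0).val * (-1 : ℂ) ^ (ip u 0).val = zeta q ^ r.val := by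
      rw [hf0, Stmt2Aux.ip_zero_right, ZMod.val_zero, pow_zero, mul_one]
    have hinner : ∀ i, ∑ x ∈ (univ.filter (· ∈ U i)).erase 0,
        zeta q ^ (f x).val * (-1 : ℂ) ^ (ip u x).val
        = zeta q ^ (k i).val * ((if u ∈ orthComp (U i) then ((2 : ℂ) ^ m) else 0) - 1) := by
      intro i
      have hfx : ∀ x ∈ (univ.filter (· ∈ U i)).erase 0,
          zeta q ^ (f x).val * (-1 : ℂ) ^ (ip u x).val
          = zeta q ^ (k i).val * (-1 : ℂ) ^ (ip u x).val := by
        intro x hx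
        simp only [Finset.mem_erase, Finset.mem_filter, Finset.mem_univ, true_and] at hx
        rw [hf i x hx.2 hx.1]
      rw [Finset.sum_congr rfl hfx, ← Finset.mul_sum]
      congr 1
      rw [Finset.sum_erase_eq_sub
        (by simp [Submodule.zero_mem] : (0 : Fin (2 * m) → ZMod 2) ∈ univ.filter (· ∈ U i))]
      rw [Stmt2Aux.sum_char (U i) u, Stmt2Aux.ip_zero_right, ZMod.val_zero, pow_zero,
        Stmt2Aux.card_filter_mem, hdim i]
      congr 1
      have hiff : (∀ x ∈ U i, ip u x = 0) ↔ u ∈ orthComp (U i) := Iff.rfl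
      by_cases h : u ∈ orthComp (U i)
      · rw [if_pos (hiff.mpr h), if_pos h]
        push_cast
        ring
      · rw [if_neg (fun hh => h (hiff.mp hh)), if_neg h]
    rw [gWHT]
    rw [← Finset.sum_erase_add _ _ (Finset.mem_univ (0 : Fin (2 * m) → ZMod 2))]
    rw [hterm0, hcover, Finset.sum_biUnion hdisj]
    rw [Finset.sum_congr rfl (fun i _ => hinner i)]
    ring
  have hzero_mem : ∀ i, (0 : Fin (2 * m) → ZMod 2) ∈ orthComp (U i) :=
    fun i x _ => Stmt2Aux.ip_zero_left x
  have h0 : gWHT f 0 = (2 : ℂ) ^ m * zeta q ^ r.val := by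
    rw [hcore 0]
    rw [Finset.sum_congr rfl (fun i _ => by rw [if_pos (hzero_mem i)])]
    rw [← Finset.sum_mul, hsum]
    ring
  have hU : ∀ u, u ≠ 0 → ∀ t, u ∈ orthComp (U t) →
      gWHT f u = (2 : ℂ) ^ m * zeta q ^ (k t).val := by
    intro u hu0 t ht
    obtain ⟨t', _, huniq⟩ := hex u hu0
    have hiff : ∀ i, u ∈ orthComp (U i) ↔ i = t := by
      intro i
      constructor
      · intro h; rw [huniq i h, huniq t ht]
      · rintro rfl; exact ht
    rw [hcore u]
    have hterm : ∀ i, zeta q ^ (k i).val * ((if u ∈ orthComp (U i) then ((2 : ℂ) ^ m) else 0) - 1)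
        = (if i = t then (2 : ℂ) ^ m * zeta q ^ (k t).val else 0) - zeta q ^ (k i).val := by
      intro i
      by_cases h : i = t
      · subst h
        rw [if_pos ((hiff i).mpr rfl), if_pos rfl]
        ring
      · rw [if_neg (fun hh => h ((hiff i).mp hh)), if_neg h]
        ring
    rw [Finset.sum_congr rfl (fun i _ => hterm i), Finset.sum_sub_distrib, hsum,
      Finset.sum_ite_eq' univ t, if_pos (Finset.mem_univ t)]
    ring
  have habs1 : ‖zeta q‖ = 1 := by
    have hz : zeta q = Complex.exp ((2 * Real.pi / q : ℝ) * Complex.I) := by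
      rw [zeta]; push_cast; ring
    rw [hz, Complex.norm_exp_ofReal_mul_I]
  have hrpow : (2 : ℝ) ^ (((2 * m : ℕ) : ℝ) / 2) = (2 : ℝ) ^ m := by
    have he : ((2 * m : ℕ) : ℝ) / 2 = ((m : ℕ) : ℝ) := by push_cast; ring
    rw [he, Real.rpow_natCast]
  have hcast : (((2 : ℝ) ^ (((2 * m : ℕ) : ℝ) / 2) : ℝ) : ℂ) = (2 : ℂ) ^ m := by
    rw [hrpow]; push_cast; ring
  have hgb : IsGbent f := by
    intro u
    by_cases hu : u = 0
    · subst hu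
      rw [h0, norm_mul, norm_pow, norm_pow, habs1, Complex.norm_two, one_pow, mul_one, hrpow]
    · obtain ⟨t, ht, _⟩ := hex u hu
      rw [hU u hu t ht, norm_mul, norm_pow, norm_pow, habs1, Complex.norm_two, one_pow, mul_one, hrpow]
  have hdual : ∀ g : (Fin (2 * m) → ZMod 2) → ZMod q, g 0 = r →
      (∀ i, ∀ x ∈ orthComp (U i), x ≠ 0 → g x = k i) → IsDualOf g f := by
    intro g hg0 hg u
    by_cases hu : u = 0
    · subst hu
      rw [h0, hg0, hcast]
    · obtain ⟨t, ht, _⟩ := hex u hu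
      rw [hU u hu t ht, hg t u ht hu, hcast]
  refine ⟨⟨hgb, fun u => ?_⟩, h0, fun u hu => ⟨hex u hu, fun t ht => hU u hu t ht⟩, hdual⟩
  by_cases hu : u = 0
  · subst hu
    exact ⟨r, by rw [h0, hcast]⟩
  · obtain ⟨t, ht, _⟩ := hex u hu
    exact ⟨k t, by rw [hU u hu t ht, hcast]⟩
end

section
/- Let a, b ∈ 𝔽_{2^m}* with a ≠ b. Then the function f : 𝔽_{2^m} × 𝔽_{2^m} → ℤ₄ given by f(x,y) = Tr_m(ax/y) + 2·Tr_m(bx/y), with the convention 1/0 = 0, is a gbent function in 2m variables. -/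
open scoped BigOperators

noncomputable instance (p n : ℕ) [Fact p.Prime] : Fintype (GaloisField p n) :=
  Fintype.ofFinite _

/-- The absolute trace `Tr_m : 𝔽_{2^m} → 𝔽₂`. -/
noncomputable def tr (m : ℕ) (x : GaloisField 2 m) : ZMod 2 :=
  Algebra.trace (ZMod 2) (GaloisField 2 m) x

/-- The generalized Walsh–Hadamard transform of `f : 𝔽_{2^m} × 𝔽_{2^m} → ℤ_q`,
using the inner product `⟨(x₁,y₁),(x₂,y₂)⟩ = Tr_m(x₁x₂ + y₁y₂)`. -/
noncomputable def gWHT2 {m q : ℕ} (f : GaloisField 2 m × GaloisField 2 m → ZMod q)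
    (u : GaloisField 2 m × GaloisField 2 m) : ℂ :=
  ∑ x : GaloisField 2 m × GaloisField 2 m,
    zeta q ^ (f x).val * (-1 : ℂ) ^ (tr m (u.1 * x.1 + u.2 * x.2)).val

/- ### Auxiliary material -/

lemma zeta_four : zeta 4 = Complex.I := by
  unfold zeta
  have : (2 * (Real.pi : ℂ) * Complex.I / ((4:ℕ):ℂ)) = (↑(Real.pi/2)) * Complex.I := by
    push_cast; ring
  rw [this, Complex.exp_mul_I, ← Complex.ofReal_cos, ← Complex.ofReal_sin,
    Real.cos_pi_div_two, Real.sin_pi_div_two]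
  simp

/-- The auxiliary character `ψ(w) = (-1)^{Tr(w)}`. -/
noncomputable def psi (m : ℕ) (w : GaloisField 2 m) : ℂ := (-1 : ℂ) ^ (tr m w).val

lemma zmod2_val_cases (s : ZMod 2) : s.val = 0 ∨ s.val = 1 := by revert s; decide

lemma val_comb (s t : ZMod 2) :
    ((((s.val : ZMod 4)) + 2 * ((t.val : ZMod 4))).val) = s.val + 2 * t.val := by
  revert s t; decide

lemma I_pow_comb (s t : ZMod 2) :
    (Complex.I) ^ (s.val + 2 * t.val)
      = ((1 + Complex.I)/2 + (1 - Complex.I)/2 * (-1 : ℂ) ^ s.val) * (-1 : ℂ) ^ t.val := by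
  rcases zmod2_val_cases s with h | h <;> rcases zmod2_val_cases t with h' | h' <;>
    rw [h, h'] <;> norm_num [pow_succ, Complex.I_mul_I] <;> ring

lemma neg_one_pow_val_add_s4 (s t : ZMod 2) :
    (-1 : ℂ) ^ (s + t).val = (-1 : ℂ) ^ s.val * (-1 : ℂ) ^ t.val := by
  rw [← pow_add, neg_one_pow_eq_pow_mod_two, neg_one_pow_eq_pow_mod_two (n := s.val + t.val)]
  congr 1
  revert s t; decide

lemma psi_add (m : ℕ) (w w' : GaloisField 2 m) :
    psi m (w + w') = psi m w * psi m w' := by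
  unfold psi tr
  rw [map_add, neg_one_pow_val_add_s4]

lemma psi_zero (m : ℕ) : psi m 0 = 1 := by
  unfold psi tr
  rw [map_zero]
  rw [ZMod.val_zero, pow_zero]

lemma psi_cases (m : ℕ) (w : GaloisField 2 m) : psi m w = 1 ∨ psi m w = -1 := by
  unfold psi
  rcases zmod2_val_cases (tr m w) with h | h <;> rw [h] <;> norm_num

lemma sum_psi_univ (m : ℕ) : ∑ x : GaloisField 2 m, psi m x = 0 := by
  obtain ⟨z, hz⟩ := Algebra.trace_surjective (ZMod 2) (GaloisField 2 m) 1
  have hpz : psi m z = -1 := by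
    unfold psi tr
    rw [hz, ZMod.val_one]
    norm_num
  have h1 : ∑ x : GaloisField 2 m, psi m x = ∑ x : GaloisField 2 m, psi m (x + z) :=
    (Fintype.sum_equiv (Equiv.addRight z) _ _ (fun x => rfl)).symm
  have h2 : ∑ x : GaloisField 2 m, psi m (x + z)
      = -∑ x : GaloisField 2 m, psi m x := by
    simp only [psi_add, hpz, mul_neg, mul_one, ← Finset.sum_neg_distrib]
  linear_combination (h1.trans h2) / 2

lemma sum_psi_mul_ne (m : ℕ) (c : GaloisField 2 m) (hc : c ≠ 0) :
    ∑ x : GaloisField 2 m, psi m (c * x) = 0 := by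
  have : ∑ x : GaloisField 2 m, psi m (c * x) = ∑ x : GaloisField 2 m, psi m x :=
    Fintype.sum_equiv (Equiv.mulLeft₀ c hc) _ _ (fun x => rfl)
  rw [this, sum_psi_univ m]

lemma sum_psi_zero_mul (m : ℕ) (hm : 0 < m) :
    ∑ x : GaloisField 2 m, psi m ((0 : GaloisField 2 m) * x) = (2 : ℂ) ^ m := by
  have hcard : Fintype.card (GaloisField 2 m) = 2 ^ m := by
    rw [← Nat.card_eq_fintype_card, GaloisField.card 2 m hm.ne']
  simp [psi_zero, hcard]

lemma psi_split (m : ℕ) (c u₁ u₂ x y : GaloisField 2 m) :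
    psi m (c * x / y + (u₁ * x + u₂ * y))
      = psi m ((c / y + u₁) * x) * psi m (u₂ * y) := by
  rw [← psi_add]
  congr 1
  rw [add_mul, ← div_mul_eq_mul_div]
  ring

/-- Evaluation of `S c = ∑_{x,y} ψ(cx/y + u₁x + u₂y)` for `c ≠ 0`, case `u₁ = 0`. -/
lemma S_eval_zero (m : ℕ) (hm : 0 < m) (u₂ c : GaloisField 2 m) (hc : c ≠ 0) :
    ∑ p : GaloisField 2 m × GaloisField 2 m,
      psi m (c * p.1 / p.2 + ((0 : GaloisField 2 m) * p.1 + u₂ * p.2)) = (2 : ℂ) ^ m := by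
  rw [Fintype.sum_prod_type]
  rw [Finset.sum_comm]
  have hsplit : ∀ y : GaloisField 2 m,
      (∑ x : GaloisField 2 m, psi m (c * x / y + (0 * x + u₂ * y)))
        = (∑ x : GaloisField 2 m, psi m ((c / y + 0) * x)) * psi m (u₂ * y) := by
    intro y
    rw [Finset.sum_mul]
    exact Finset.sum_congr rfl fun x _ => psi_split m c 0 u₂ x y
  simp only [hsplit]
  rw [Fintype.sum_eq_single (0 : GaloisField 2 m)]
  · rw [div_zero, add_zero, sum_psi_zero_mul m hm, mul_zero, psi_zero, mul_one]
  · intro y hy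
    rw [add_zero, sum_psi_mul_ne m _ (div_ne_zero hc hy), zero_mul]

/-- Case `u₁ ≠ 0`. -/
lemma S_eval_ne (m : ℕ) (hm : 0 < m) (u₁ u₂ c : GaloisField 2 m)
    (hu : u₁ ≠ 0) (hc : c ≠ 0) :
    ∑ p : GaloisField 2 m × GaloisField 2 m,
      psi m (c * p.1 / p.2 + (u₁ * p.1 + u₂ * p.2))
      = psi m (u₂ * (c / u₁)) * (2 : ℂ) ^ m := by
  rw [Fintype.sum_prod_type]
  rw [Finset.sum_comm]
  have hsplit : ∀ y : GaloisField 2 m,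
      (∑ x : GaloisField 2 m, psi m (c * x / y + (u₁ * x + u₂ * y)))
        = (∑ x : GaloisField 2 m, psi m ((c / y + u₁) * x)) * psi m (u₂ * y) := by
    intro y
    rw [Finset.sum_mul]
    exact Finset.sum_congr rfl fun x _ => psi_split m c u₁ u₂ x y
  simp only [hsplit]
  rw [Fintype.sum_eq_single (c / u₁)]
  · have h1 : c / (c / u₁) + u₁ = 0 := by
      have : c / (c / u₁) = u₁ := by field_simp
      rw [this, CharTwo.add_self_eq_zero]
    rw [h1, sum_psi_zero_mul m hm]
    ring
  · intro y hy
    have h2 : c / y + u₁ ≠ 0 := by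
      intro h
      have h3 : c / y = u₁ := by
        have := eq_neg_of_add_eq_zero_left h
        rwa [CharTwo.neg_eq] at this
      have hyne : y ≠ 0 := by
        intro h4
        rw [h4, div_zero] at h3
        exact hu h3.symm
      apply hy
      field_simp at h3
      rw [mul_comm] at h3
      rw [h3, mul_div_cancel_left₀ _ hu]
    rw [sum_psi_mul_ne m _ h2, zero_mul]

lemma abs_comb (e₁ e₂ : ℂ) (h₁ : e₁ = 1 ∨ e₁ = -1) (h₂ : e₂ = 1 ∨ e₂ = -1) :
    ‖(1 + Complex.I)/2 * e₁ + (1 - Complex.I)/2 * e₂‖ = 1 := by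
  rcases h₁ with rfl | rfl <;> rcases h₂ with rfl | rfl
  · have h : (1 + Complex.I)/2 * 1 + (1 - Complex.I)/2 * 1 = 1 := by ring
    rw [h]; simp
  · have h : (1 + Complex.I)/2 * 1 + (1 - Complex.I)/2 * (-1) = Complex.I := by ring
    rw [h]; simp
  · have h : (1 + Complex.I)/2 * (-1) + (1 - Complex.I)/2 * 1 = -Complex.I := by ring
    rw [h]; simp
  · have h : (1 + Complex.I)/2 * (-1) + (1 - Complex.I)/2 * (-1) = -1 := by ring
    rw [h]; simp

/-- for distinct `a, b ∈ 𝔽_{2^m}^*`, the function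
`f(x,y) = Tr_m(ax/y) + 2 Tr_m(bx/y) : 𝔽_{2^m} × 𝔽_{2^m} → ℤ₄` is gbent. -/
theorem stmt4 (m : ℕ) (hm : 0 < m) (a b : GaloisField 2 m)
    (ha : a ≠ 0) (hb : b ≠ 0) (hab : a ≠ b)
    (f : GaloisField 2 m × GaloisField 2 m → ZMod 4)
    (hf : ∀ x y, f (x, y) =
      ((tr m (a * x / y)).val : ZMod 4) + 2 * ((tr m (b * x / y)).val : ZMod 4)) :
    ∀ u, ‖gWHT2 f u‖ = (2 : ℝ) ^ m := by
  rintro ⟨u₁, u₂⟩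
  have hab' : a + b ≠ 0 := by
    intro h
    exact hab (by rw [eq_neg_of_add_eq_zero_left h, CharTwo.neg_eq])
  -- rewrite each summand
  have hterm : ∀ x y : GaloisField 2 m,
      zeta 4 ^ (f (x, y)).val * (-1 : ℂ) ^ (tr m (u₁ * x + u₂ * y)).val
        = (1 + Complex.I)/2 * psi m (b * x / y + (u₁ * x + u₂ * y))
          + (1 - Complex.I)/2 * psi m ((a + b) * x / y + (u₁ * x + u₂ * y)) := by
    intro x y
    rw [hf x y, zeta_four, val_comb, I_pow_comb]
    have h1 : psi m (b * x / y + (u₁ * x + u₂ * y))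
        = psi m (b * x / y) * psi m (u₁ * x + u₂ * y) := psi_add _ _ _
    have h2 : psi m ((a + b) * x / y + (u₁ * x + u₂ * y))
        = psi m (a * x / y) * (psi m (b * x / y) * psi m (u₁ * x + u₂ * y)) := by
      rw [add_mul, add_div, psi_add, psi_add]
      ring
    rw [h1, h2]
    unfold psi
    ring
  have hsum : gWHT2 f (u₁, u₂)
      = (1 + Complex.I)/2 *
          (∑ p : GaloisField 2 m × GaloisField 2 m,
            psi m (b * p.1 / p.2 + (u₁ * p.1 + u₂ * p.2)))
        + (1 - Complex.I)/2 *
          (∑ p : GaloisField 2 m × GaloisField 2 m,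
            psi m ((a + b) * p.1 / p.2 + (u₁ * p.1 + u₂ * p.2))) := by
    unfold gWHT2
    rw [Finset.mul_sum, Finset.mul_sum, ← Finset.sum_add_distrib]
    exact Finset.sum_congr rfl fun p _ => hterm p.1 p.2
  rcases eq_or_ne u₁ 0 with rfl | hu
  · rw [hsum, S_eval_zero m hm u₂ b hb, S_eval_zero m hm u₂ (a + b) hab']
    have h : (1 + Complex.I)/2 * (2:ℂ)^m + (1 - Complex.I)/2 * (2:ℂ)^m = (2:ℂ)^m := by
      ring
    rw [h]
    rw [norm_pow, Complex.norm_two]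
  · rw [hsum, S_eval_ne m hm u₁ u₂ b hu hb, S_eval_ne m hm u₁ u₂ (a + b) hu hab']
    have h : (1 + Complex.I)/2 * (psi m (u₂ * (b / u₁)) * (2:ℂ)^m)
        + (1 - Complex.I)/2 * (psi m (u₂ * ((a + b) / u₁)) * (2:ℂ)^m)
        = ((1 + Complex.I)/2 * psi m (u₂ * (b / u₁))
            + (1 - Complex.I)/2 * psi m (u₂ * ((a + b) / u₁))) * (2:ℂ)^m := by
      ring
    rw [h, norm_mul, abs_comb _ _ (psi_cases m _) (psi_cases m _), one_mul,
      norm_pow, Complex.norm_two]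
end

section
/- Let a, b ∈ 𝔽_{2^m}* with a ≠ b, and let i = e^{2πi/4}. Then Σ_{s ∈ 𝔽_{2^m}} i^{Tr_m(as) + 2·Tr_m(bs)} = 0, where Tr_m is the absolute trace of 𝔽_{2^m} and its values in 𝔽₂ are identified with the integers 0, 1 in the exponent. -/
open scoped BigOperators

lemma v0 : ((0:ZMod 2)).val = 0 := rfl
lemma v1 : ((1:ZMod 2)).val = 1 := rfl
lemma v2 : ((2:ZMod 2)).val = 0 := rfl

lemma neg_one_pow_add (x y : ZMod 2) :
    (-1 : ℂ) ^ ((x + y).val) = (-1) ^ x.val * (-1) ^ y.val := by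
  rw [ZMod.val_add]; fin_cases x <;> fin_cases y <;> norm_num [v0, v1, v2, ZMod.val]

lemma step (t : ZMod 2) : (-1 : ℂ) ^ (t + 1).val = -(-1 : ℂ) ^ t.val := by
  rw [ZMod.val_add, v1]; fin_cases t <;> norm_num [v0, v1, v2, ZMod.val]

lemma key (m : ℕ) (c : GaloisField 2 m) (hc : c ≠ 0) :
    ∑ s : GaloisField 2 m, (-1 : ℂ) ^ (tr m (c * s)).val = 0 := by
  obtain ⟨z, hz⟩ := Algebra.trace_surjective (ZMod 2) (GaloisField 2 m) 1
  set s₀ := c⁻¹ * z with hs₀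
  have h1 : tr m (c * s₀) = 1 := by
    rw [hs₀, ← mul_assoc, mul_inv_cancel₀ hc, one_mul]; exact hz
  have hS : ∑ s : GaloisField 2 m, (-1 : ℂ) ^ (tr m (c * s)).val
      = ∑ s : GaloisField 2 m, (-1 : ℂ) ^ (tr m (c * (s + s₀))).val :=
    (Fintype.sum_equiv (Equiv.addRight s₀) _ _ (fun s => rfl)).symm
  have htr : ∀ s : GaloisField 2 m, tr m (c * (s + s₀)) = tr m (c * s) + 1 := by
    intro s
    rw [mul_add, tr, map_add, ← h1]; rfl
  have h2 : ∑ s : GaloisField 2 m, (-1 : ℂ) ^ (tr m (c * s)).val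
      = -∑ s : GaloisField 2 m, (-1 : ℂ) ^ (tr m (c * s)).val := by
    conv_lhs => rw [hS]
    rw [← Finset.sum_neg_distrib]
    refine Finset.sum_congr rfl fun s _ => ?_
    rw [htr s]
    exact step (tr m (c * s))
  have h3 : (∑ s : GaloisField 2 m, (-1 : ℂ) ^ (tr m (c * s)).val)
      + ∑ s : GaloisField 2 m, (-1 : ℂ) ^ (tr m (c * s)).val = 0 := by
    nth_rewrite 1 [h2]; ring
  exact add_self_eq_zero.mp h3

/-- for distinct `a, b ∈ 𝔽_{2^m}^*` and `i = e^{2πi/4}`,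
`Σ_s i^{Tr_m(as) + 2 Tr_m(bs)} = 0`. -/
theorem stmt5 (m : ℕ) (hm : 0 < m) (a b : GaloisField 2 m)
    (ha : a ≠ 0) (hb : b ≠ 0) (hab : a ≠ b) :
    ∑ s : GaloisField 2 m,
      zeta 4 ^ ((tr m (a * s)).val + 2 * (tr m (b * s)).val) = 0 := by
  have hab' : a + b ≠ 0 := fun h => hab (by
    have h' : a = -b := eq_neg_of_add_eq_zero_left h
    rwa [CharTwo.neg_eq] at h')
  have split : ∀ x y : ZMod 2, Complex.I ^ (x.val + 2 * y.val)
      = (1 + Complex.I)/2 * (-1 : ℂ) ^ y.val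
        + (1 - Complex.I)/2 * ((-1 : ℂ) ^ x.val * (-1 : ℂ) ^ y.val) := by
    intro x y
    fin_cases x <;> fin_cases y <;>
      norm_num [v0, v1, v2, ZMod.val, pow_succ, Complex.I_sq] <;> ring
  calc ∑ s : GaloisField 2 m, zeta 4 ^ ((tr m (a * s)).val + 2 * (tr m (b * s)).val)
      = ∑ s : GaloisField 2 m, ((1 + Complex.I)/2 * (-1 : ℂ) ^ (tr m (b * s)).val
        + (1 - Complex.I)/2 * (-1 : ℂ) ^ (tr m ((a + b) * s)).val) := by
        refine Finset.sum_congr rfl fun s _ => ?_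
        rw [zeta_four, split]
        congr 1
        rw [show (a+b)*s = a*s + b*s by ring]
        simp only [tr, map_add, neg_one_pow_add]
    _ = 0 := by
        rw [Finset.sum_add_distrib, ← Finset.mul_sum, ← Finset.mul_sum,
          key m b hb, key m (a+b) hab', mul_zero, mul_zero, add_zero]
end

section
/- Let q = 2^t with t ≥ 1 and let n be even. Then every gbent function f : 𝔽₂ⁿ → ℤ_{2^t} is regular; that is, for every u ∈ 𝔽₂ⁿ there exists j_u ∈ ℤ_{2^t} such that H_f(u) = 2^{n/2} ζ^{j_u}, where ζ = e^{2πi/2^t}. -/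
open scoped BigOperators

private lemma one_sub_dvd_one_sub_pow' {R : Type*} [CommRing R] (x : R) (i : ℕ) :
    (1 - x) ∣ (1 - x ^ i) := by
  simpa using sub_dvd_pow_sub_pow 1 x i

private lemma assoc_one_sub {R : Type*} [CommRing R] [IsDomain R] {q : ℕ} (hq : q ≠ 0) {ζ μ : R}
    (hζ : IsPrimitiveRoot ζ q) (hμ : IsPrimitiveRoot μ q) :
    Associated (1 - μ) (1 - ζ) := by
  haveI : NeZero q := ⟨hq⟩
  obtain ⟨i, -, hi⟩ := hζ.eq_pow_of_pow_eq_one hμ.pow_eq_one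
  obtain ⟨j, -, hj⟩ := hμ.eq_pow_of_pow_eq_one hζ.pow_eq_one
  refine associated_of_dvd_dvd ?_ ?_
  · rw [← hj]; exact one_sub_dvd_one_sub_pow' μ j
  · rw [← hi]; exact one_sub_dvd_one_sub_pow' ζ i

private lemma prod_assoc_pow {R : Type*} [CommMonoid R] {ι : Type*} [DecidableEq ι]
    (s : Finset ι) (g : ι → R) (a : R) (h : ∀ i ∈ s, Associated (g i) a) :
    Associated (∏ i ∈ s, g i) (a ^ s.card) := by
  induction s using Finset.induction_on with
  | empty => simp
  | @insert b s' hx ih =>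
    rw [Finset.prod_insert hx, Finset.card_insert_of_notMem hx, pow_succ, mul_comm (a ^ s'.card)]
    exact (h b (Finset.mem_insert_self b s')).mul_mul
      (ih fun i hi => h i (Finset.mem_insert_of_mem hi))

private lemma pow_dvd_of_mul_conj {R : Type*} [CommRing R] [IsDomain R] {l : R} (hl : Prime l)
    (c : R ≃+* R) (hc : Associated (c l) l) :
    ∀ (m : ℕ) (A : R), Associated (A * c A) (l ^ (2 * m)) → l ^ m ∣ A := by
  intro m
  induction m with
  | zero => exact fun A _ => by simpa using one_dvd A
  | succ m ih =>
    intro A h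
    have hlA : l ∣ A := by
      have h1 : l ∣ A * c A :=
        dvd_trans (dvd_pow_self l (by omega : 2 * (m + 1) ≠ 0)) h.symm.dvd
      rcases hl.2.2 _ _ h1 with h2 | h2
      · exact h2
      · have h3 : c.symm l ∣ A := by
          have := map_dvd c.symm h2
          simpa using this
        have h4 : Associated l (c.symm l) := by
          obtain ⟨u, hu⟩ := hc
          refine ⟨Units.map (c.symm : R ≃* R).toMonoidHom u, ?_⟩
          have := congrArg c.symm hu
          simpa using this
        exact h4.dvd.trans h3
    obtain ⟨A', rfl⟩ := hlA
    have h5 : Associated (A' * c A') (l ^ (2 * m)) := by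
      have e1 : (l * A') * c (l * A') = (l * c l) * (A' * c A') := by
        rw [map_mul]; ring
      rw [e1] at h
      have e2 : Associated (l * c l) (l ^ 2) := by
        have := (hc.mul_left l)
        rwa [← sq] at this
      have e3 : Associated (l ^ 2 * (A' * c A')) (l ^ 2 * l ^ (2 * m)) := by
        have heq : l ^ (2 * (m + 1)) = l ^ 2 * l ^ (2 * m) := by ring
        have := (e2.symm.mul_right (A' * c A')).trans h
        rwa [heq] at this
      exact Associated.of_mul_left e3 (Associated.refl (l ^ 2)) (pow_ne_zero 2 hl.ne_zero)
    obtain ⟨w, hw⟩ := ih A' h5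
    exact ⟨w, by rw [hw, pow_succ]; ring⟩

private lemma order_arith {t D : ℕ} (ht : 1 ≤ t) (hdvd : 2 ^ t ∣ D) (hD : D ≠ 0)
    (htot : D.totient ≤ 2 ^ (t - 1)) : D = 2 ^ t := by
  have hp2 : Nat.Prime 2 := Nat.prime_two
  set a := D.factorization 2 with ha
  have hta : t ≤ a := (Nat.Prime.pow_dvd_iff_le_factorization hp2 hD).mp hdvd
  have hDfac : 2 ^ a * (D / 2 ^ a) = D := Nat.ordProj_mul_ordCompl_eq_self D 2
  set r := D / 2 ^ a with hr
  have hrne : r ≠ 0 := (Nat.ordCompl_pos 2 hD).ne'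
  have hcop : Nat.Coprime (2 ^ a) r := (Nat.coprime_ordCompl hp2 hD).pow_left _
  have hndvd : ¬ (2 ∣ r) := Nat.not_dvd_ordCompl hp2 hD
  have htotD : D.totient = (2 ^ a).totient * r.totient := by
    rw [← hDfac, Nat.totient_mul hcop]
  have hpa : 0 < a := lt_of_lt_of_le ht hta
  have htota : (2 ^ a).totient = 2 ^ (a - 1) := by
    rw [Nat.totient_prime_pow hp2 hpa]; simp
  have hr1 : 1 ≤ r.totient := Nat.totient_pos.mpr (Nat.pos_of_ne_zero hrne)
  have hle : 2 ^ (a - 1) ≤ 2 ^ (t - 1) := by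
    calc 2 ^ (a - 1) = 2 ^ (a - 1) * 1 := (mul_one _).symm
    _ ≤ 2 ^ (a - 1) * r.totient := Nat.mul_le_mul_left _ hr1
    _ = D.totient := by rw [htotD, htota]
    _ ≤ 2 ^ (t - 1) := htot
  have hat : a = t := le_antisymm (by
    have := (Nat.pow_le_pow_iff_right (by norm_num : 1 < 2)).mp hle
    omega) hta
  have hrt : r.totient = 1 := by
    have h2 : 2 ^ (t - 1) * r.totient ≤ 2 ^ (t - 1) * 1 := by
      calc 2 ^ (t - 1) * r.totient = D.totient := by rw [htotD, htota, hat]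
      _ ≤ 2 ^ (t - 1) * 1 := by simpa using htot
    have := Nat.le_of_mul_le_mul_left h2 (Nat.pow_pos (by norm_num))
    omega
  have : r = 1 := by
    rcases Nat.totient_eq_one_iff.mp hrt with h | h
    · exact h
    · exact absurd (by rw [h]) hndvd
  rw [← hDfac, this, hat, mul_one]

section Aux

open NumberField

theorem test9 (s k : ℕ)
    (f : (Fin (2 * s) → ZMod 2) → ZMod (2 ^ (k + 1))) (hf : IsGbent f) :
    ∀ u, ∃ j : ZMod (2 ^ (k + 1)),
      gWHT f u = (((2 : ℝ) ^ (((2 * s : ℕ) : ℝ) / 2) : ℝ) : ℂ) * zeta (2 ^ (k + 1)) ^ j.val := by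
  classical
  intro u
  haveI : Fact (Nat.Prime ((2 : ℕ+) : ℕ)) := ⟨by norm_num⟩
  set q : ℕ+ := (2 : ℕ+) ^ (k + 1) with hqdef
  have hqn : (q : ℕ) = 2 ^ (k + 1) := by simp [hqdef]
  have hq0 : (2 ^ (k + 1) : ℕ) ≠ 0 := by positivity
  have hqn0 : (q : ℕ) ≠ 0 := by rw [hqn]; exact hq0
  -- the complex primitive root
  have hz : IsPrimitiveRoot (zeta (2 ^ (k + 1))) (2 ^ (k + 1)) := by
    have := Complex.isPrimitiveRoot_exp (2 ^ (k + 1)) hq0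
    unfold zeta
    exact_mod_cast this
  haveI : NeZero (((q : ℕ) : ℚ)) := ⟨by exact_mod_cast hqn0⟩
  haveI : IsCyclotomicExtension {(q : ℕ)} ℚ (CyclotomicField (q : ℕ) ℚ) :=
    CyclotomicField.isCyclotomicExtension (q : ℕ) ℚ
  set K := CyclotomicField q ℚ with hK
  haveI : NumberField K := IsCyclotomicExtension.numberField {(q : ℕ)} ℚ K
  have hirr : Irreducible (Polynomial.cyclotomic (q : ℕ) ℚ) :=
    Polynomial.cyclotomic.irreducible_rat q.pos
  set ζ : K := IsCyclotomicExtension.zeta q ℚ K with hζdef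
  have hζ : IsPrimitiveRoot ζ (q : ℕ) := IsCyclotomicExtension.zeta_spec q ℚ K
  have hzmem : zeta (2 ^ (k + 1)) ∈ primitiveRoots (q : ℕ) ℂ := by
    rw [mem_primitiveRoots q.pos, hqn]
    exact hz
  set ιa : K →ₐ[ℚ] ℂ := (hζ.embeddingsEquivPrimitiveRoots ℂ hirr).symm ⟨_, hzmem⟩ with hιadef
  have hι : ιa ζ = zeta (2 ^ (k + 1)) := by
    have h1 := hζ.embeddingsEquivPrimitiveRoots_apply_coe ℂ hirr
      ((hζ.embeddingsEquivPrimitiveRoots ℂ hirr).symm ⟨_, hzmem⟩)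
    rw [Equiv.apply_symm_apply] at h1
    exact h1.symm
  -- Galois setup
  haveI : IsGalois ℚ K := IsCyclotomicExtension.isGalois {(q : ℕ)} ℚ K
  letI : Algebra K ℂ := ιa.toRingHom.toAlgebra
  haveI : IsScalarTower ℚ K ℂ := IsScalarTower.of_algebraMap_eq fun x => (ιa.commutes x).symm
  -- complex conjugation on K
  set c : K ≃ₐ[ℚ] K := ((starRingEnd ℂ).comp ιa.toRingHom).toRatAlgHom.restrictNormal' K
    with hcdef
  have hc : ∀ x : K, ιa (c x) = starRingEnd ℂ (ιa x) := by
    intro x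
    have h1 := AlgHom.restrictNormal_commutes
      ((starRingEnd ℂ).comp ιa.toRingHom).toRatAlgHom K x
    exact h1
  have hcomm : ∀ (σ : K ≃ₐ[ℚ] K) (x : K), σ (c x) = c (σ x) := by
    intro σ x
    have h1 : σ * c = c * σ := (hζ.autToPow_injective ℚ) (by rw [map_mul, map_mul, mul_comm])
    calc σ (c x) = (σ * c) x := rfl
    _ = (c * σ) x := by rw [h1]
    _ = c (σ x) := rfl
  -- ring of integers
  set ζO : 𝓞 K := hζ.toInteger with hζOdef
  have hζOpr : IsPrimitiveRoot ζO (q : ℕ) := hζ.toInteger_isPrimitiveRoot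
  set l : 𝓞 K := 1 - ζO with hldef
  have hlprime : Prime l := by
    have h1 : Prime (ζO - 1) := by
      haveI : Fact (Nat.Prime 2) := ⟨Nat.prime_two⟩
      haveI : IsCyclotomicExtension {2 ^ (k + 1)} ℚ K := hqn ▸ inferInstance
      exact hζ.zeta_sub_one_prime (p := 2) (k := k)
    have h2 : l = -(ζO - 1) := by rw [hldef]; ring
    rw [h2]
    exact h1.neg
  -- 2 is associated to l ^ (2 ^ k)
  have hcard : (primitiveRoots (q : ℕ) (𝓞 K)).card = 2 ^ k := by
    rw [hζOpr.card_primitiveRoots, hqn,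
      Nat.totient_prime_pow Nat.prime_two (by omega : 0 < k + 1)]
    simp
  have h2eval : (2 : 𝓞 K) = ∏ μ ∈ primitiveRoots (q : ℕ) (𝓞 K), (1 - μ) := by
    have he := Polynomial.eval_one_cyclotomic_prime_pow (R := 𝓞 K) (p := 2) k
    have hc2 := Polynomial.cyclotomic_eq_prod_X_sub_primitiveRoots hζOpr
    rw [← hqn, hc2, Polynomial.eval_prod] at he
    simp only [Polynomial.eval_sub, Polynomial.eval_one, Polynomial.eval_X,
      Polynomial.eval_C] at he
    exact_mod_cast he.symm
  have h2assoc : Associated ((2 : 𝓞 K)) (l ^ (2 ^ k)) := by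
    rw [h2eval, ← hcard, hldef]
    refine prod_assoc_pow _ _ _ (fun μ hμm => ?_)
    exact assoc_one_sub hqn0 hζOpr ((mem_primitiveRoots q.pos).mp hμm)
  -- conjugation on the ring of integers
  set cO : 𝓞 K ≃+* 𝓞 K := NumberField.RingOfIntegers.mapRingEquiv c with hcOdef
  have hcOcoe : ∀ x : 𝓞 K, (algebraMap (𝓞 K) K) (cO x) = c ((algebraMap (𝓞 K) K) x) :=
    fun x => rfl
  have hclassoc : Associated (cO l) l := by
    have h2 : IsPrimitiveRoot (cO ζO) (q : ℕ) :=
      hζOpr.map_of_injective (f := cO.toRingHom.toMonoidHom) cO.injective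
    have h1 : cO l = 1 - cO ζO := by rw [hldef, map_sub, map_one]
    rw [h1, hldef]
    exact assoc_one_sub hqn0 hζOpr h2
  -- the transform as an algebraic integer
  set A : 𝓞 K := ∑ x : Fin (2 * s) → ZMod 2, ζO ^ (f x).val * (-1 : 𝓞 K) ^ (ip u x).val
    with hAdef
  set ι2 : 𝓞 K →+* ℂ := ιa.toRingHom.comp (algebraMap (𝓞 K) K) with hι2def
  have hι2inj : Function.Injective ι2 :=
    (ιa.toRingHom.injective).comp NumberField.RingOfIntegers.coe_injective
  have hι2ζ : ι2 ζO = zeta (2 ^ (k + 1)) := by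
    rw [hι2def]
    simp only [RingHom.comp_apply]
    have : (algebraMap (𝓞 K) K) ζO = ζ := rfl
    rw [this]
    exact hι
  have hιA : ι2 A = gWHT f u := by
    rw [hAdef, map_sum]
    unfold gWHT
    refine Finset.sum_congr rfl (fun x _ => ?_)
    rw [map_mul, map_pow, map_pow, map_neg, map_one, hι2ζ]
  -- |alpha|^2 = 2^(2s)
  have habs : ‖gWHT f u‖ = 2 ^ s := by
    have h1 := hf u
    rw [show (((2 * s : ℕ) : ℝ)) / 2 = ((s : ℕ) : ℝ) by push_cast; ring] at h1
    rw [h1, Real.rpow_natCast]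
  have hαconj : gWHT f u * (starRingEnd ℂ) (gWHT f u) = (2 : ℂ) ^ (2 * s) := by
    rw [Complex.mul_conj, ← Complex.sq_norm, habs]
    push_cast
    ring
  have hAcA : A * cO A = 2 ^ (2 * s) := by
    apply hι2inj
    rw [map_mul, map_pow]
    have h1 : ι2 (cO A) = starRingEnd ℂ (ι2 A) := by
      rw [hι2def]
      simp only [RingHom.comp_apply]
      rw [hcOcoe]
      exact hc _
    rw [hιA, h1, hιA, hαconj, map_ofNat]
  -- extract the 2-power factor
  have hkey : l ^ (s * 2 ^ k) ∣ A := by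
    apply pow_dvd_of_mul_conj hlprime cO hclassoc
    rw [hAcA]
    have h1 : Associated ((2 : 𝓞 K) ^ (2 * s)) ((l ^ 2 ^ k) ^ (2 * s)) := h2assoc.pow_pow
    have h2 : (l ^ 2 ^ k) ^ (2 * s) = l ^ (2 * (s * 2 ^ k)) := by
      rw [← pow_mul]
      ring_nf
    rwa [h2] at h1
  obtain ⟨B, hB⟩ := hkey
  have h2sassoc : Associated ((2 : 𝓞 K) ^ s) (l ^ (s * 2 ^ k)) := by
    have h1 : Associated ((2 : 𝓞 K) ^ s) ((l ^ 2 ^ k) ^ s) := h2assoc.pow_pow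
    have h2 : (l ^ 2 ^ k) ^ s = l ^ (s * 2 ^ k) := by rw [← pow_mul]; ring_nf
    rwa [h2] at h1
  obtain ⟨w, hw⟩ := h2sassoc
  set β : K := algebraMap (𝓞 K) K (B * w) with hβdef
  have hβint : IsIntegral ℤ β := NumberField.RingOfIntegers.isIntegral_coe _
  have hAeq : A = 2 ^ s * (B * (w : 𝓞 K)) := by
    rw [hB, ← hw]
    ring
  have hAK : algebraMap (𝓞 K) K A = 2 ^ s * β := by
    rw [hAeq, map_mul, map_pow, map_ofNat, hβdef]
  have h2sne : ((2 : K) ^ s) ≠ 0 := pow_ne_zero _ two_ne_zero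
  have hβc : β * c β = 1 := by
    have h3 := congrArg (algebraMap (𝓞 K) K) hAcA
    rw [map_mul, map_pow, map_ofNat, hcOcoe, hAK, map_mul, map_pow, map_ofNat] at h3
    have h5 : ((2 : K) ^ s * 2 ^ s) * (β * c β) = 2 ^ s * β * (2 ^ s * c β) := by ring
    rw [h3] at h5
    have h6 : ((2 : K) ^ s * 2 ^ s) * 1 = 2 ^ (2 * s) := by rw [mul_one, ← pow_add]; ring_nf
    exact mul_left_cancel₀ (mul_ne_zero h2sne h2sne) (h5.trans h6.symm)
  -- all archimedean absolute values of β are 1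
  have hnorm : ∀ φ : K →+* ℂ, ‖φ β‖ = 1 := by
    intro φ
    set Φ : K ≃ₐ[ℚ] K := φ.toRatAlgHom.restrictNormal' K with hΦdef
    have hΦ : ∀ x, ιa (Φ x) = φ x := fun x => AlgHom.restrictNormal_commutes φ.toRatAlgHom K x
    have h1 : φ β * starRingEnd ℂ (φ β) = 1 := by
      rw [← hΦ β, ← hc (Φ β), ← hcomm Φ β, ← map_mul, ← map_mul, hβc, map_one, map_one]
    have h2 : (Complex.normSq (φ β) : ℂ) = 1 := by rw [← Complex.mul_conj]; exact h1
    have h3 : Complex.normSq (φ β) = 1 := by exact_mod_cast h2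
    rw [Complex.norm_def, h3, Real.sqrt_one]
  obtain ⟨N, hN0, hβN⟩ := NumberField.Embeddings.pow_eq_one_of_norm_eq_one K ℂ hβint hnorm
  -- β is a 2^(k+1)-st root of unity
  have hβunit : IsUnit β := IsUnit.of_pow_eq_one hβN hN0.ne'
  set βu : Kˣ := hβunit.unit with hβudef
  have hβuval : (βu : K) = β := rfl
  set zu : Kˣ := (hζ.isUnit hqn0).unit with hzudef
  have hzuval : (zu : K) = ζ := rfl
  have hzuord : orderOf zu = (q : ℕ) := by
    rw [← orderOf_units, hzuval]
    exact hζ.eq_orderOf.symm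
  have hβuN : βu ^ N = 1 := by
    ext
    rw [Units.val_pow_eq_pow_val, hβuval, hβN, Units.val_one]
  have hβuord : orderOf βu ∣ N := orderOf_dvd_of_pow_eq_one hβuN
  have hβuord0 : orderOf βu ≠ 0 := by
    intro h
    rw [h] at hβuord
    exact hN0.ne' (zero_dvd_iff.mp hβuord)
  obtain ⟨g, -, hg⟩ := (Commute.all βu zu).exists_orderOf_eq_lcm
  have hqD : (q : ℕ) ∣ orderOf g := by
    rw [hg]
    exact dvd_trans (dvd_of_eq hzuord.symm) (Nat.dvd_lcm_right _ _)
  have hβD : orderOf βu ∣ orderOf g := by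
    rw [hg]
    exact Nat.dvd_lcm_left _ _
  have hD0 : orderOf g ≠ 0 := by
    rw [hg]
    exact Nat.lcm_ne_zero hβuord0 (by rw [hzuord]; exact hqn0)
  have hgprim : IsPrimitiveRoot ((g : K)) (orderOf g) := by
    have h1 := IsPrimitiveRoot.orderOf (g : K)
    rwa [orderOf_units] at h1
  have htotD : (orderOf g).totient ≤ 2 ^ k := by
    have hmin : Polynomial.cyclotomic (orderOf g) ℚ = minpoly ℚ ((g : K)) :=
      Polynomial.cyclotomic_eq_minpoly_rat hgprim (Nat.pos_of_ne_zero hD0)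
    have hdeg : (minpoly ℚ ((g : K))).natDegree ≤ Module.finrank ℚ K :=
      minpoly.natDegree_le _
    rw [← hmin, Polynomial.natDegree_cyclotomic] at hdeg
    rw [IsCyclotomicExtension.finrank K hirr, congrArg Nat.totient hqn,
      Nat.totient_prime_pow Nat.prime_two (by omega : 0 < k + 1)] at hdeg
    simpa using hdeg
  have hD : orderOf g = 2 ^ (k + 1) :=
    order_arith (by omega) (hqn ▸ hqD) hD0 (by simpa using htotD)
  have hβq : β ^ ((q : ℕ)) = 1 := by
    have h1 : βu ^ ((2 : ℕ) ^ (k + 1)) = 1 := orderOf_dvd_iff_pow_eq_one.mp (hD ▸ hβD)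
    have h2 := congrArg (Units.val) h1
    rw [Units.val_pow_eq_pow_val, hβuval, Units.val_one] at h2
    rw [congrArg (fun m => β ^ m) hqn]
    exact h2
  haveI : NeZero ((q : ℕ)) := ⟨hqn0⟩
  obtain ⟨i, hik, hieq⟩ := hζ.eq_pow_of_pow_eq_one hβq
  -- conclusion
  refine ⟨(i : ZMod (2 ^ (k + 1))), ?_⟩
  have hival : ((i : ZMod (2 ^ (k + 1))).val) = i := by
    apply ZMod.val_cast_of_lt
    rw [← hqn]
    exact hik
  rw [hival]
  have hfinal : gWHT f u = (2 : ℂ) ^ s * zeta (2 ^ (k + 1)) ^ i := by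
    rw [← hιA, hAeq, map_mul, map_pow, map_ofNat]
    congr 1
    have h1 : ι2 (B * (w : 𝓞 K)) = ιa β := by rw [hι2def]; rfl
    rw [h1, ← hieq, map_pow, hι]
  rw [hfinal]
  congr 1
  rw [show (((2 * s : ℕ) : ℝ)) / 2 = ((s : ℕ) : ℝ) by push_cast; ring, Real.rpow_natCast]
  push_cast
  ring

end Aux

/-- every gbent function `f : 𝔽₂ⁿ → ℤ_{2^t}` (`n` even) is regular:
`H_f(u) = 2^{n/2} ζ^{j_u}` for some `j_u ∈ ℤ_{2^t}`, for all `u`. -/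
theorem stmt9 (n t : ℕ) (ht : 1 ≤ t) (hn : Even n)
    (f : (Fin n → ZMod 2) → ZMod (2 ^ t)) (hf : IsGbent f) :
    ∀ u, ∃ j : ZMod (2 ^ t),
      gWHT f u = (((2 : ℝ) ^ ((n : ℝ) / 2) : ℝ) : ℂ) * zeta (2 ^ t) ^ j.val := by
  obtain ⟨k, rfl⟩ : ∃ k, t = k + 1 := ⟨t - 1, (Nat.succ_pred_eq_of_pos ht).symm⟩
  obtain ⟨s, hs⟩ := hn
  have h2 : n = 2 * s := by omega
  subst h2
  exact test9 s k f hf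
end

section
/- Let q = 2^t and let n > 2 be an even integer. If F : 𝔽₂ⁿ → ℤ_q^m is a vectorial gbent function, then m ≤ n/(2t), i.e. 2tm ≤ n. -/
open scoped BigOperators

namespace S12

open Finset Complex

noncomputable def zz (t : ℕ) : ℂ := zeta (2 ^ t)

lemma hprim (t : ℕ) : IsPrimitiveRoot (zz t) (2 ^ t) := by
  simpa [zz, zeta] using Complex.isPrimitiveRoot_exp (2 ^ t) (by positivity)

lemma zq (t : ℕ) : zz t ^ (2 ^ t : ℕ) = 1 := (hprim t).pow_eq_one

def R (t : ℕ) : Subring ℂ := Subring.closure {zz t}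

lemma z_mem (t : ℕ) : zz t ∈ R t := Subring.subset_closure (Set.mem_singleton _)

lemma zpow_mem (t k : ℕ) : zz t ^ k ∈ R t := pow_mem (z_mem t) k

noncomputable def lam (t : ℕ) : ℂ := 1 - zz t

lemma lam_def (t : ℕ) : lam t = 1 - zz t := rfl

lemma lam_mem (t : ℕ) : lam t ∈ R t := sub_mem (one_mem _) (z_mem t)

/-- relative divisibility in the subring `R t` -/
def RD (t : ℕ) (x y : ℂ) : Prop := ∃ k, k ∈ R t ∧ y = x * k

lemma zpow_mod (t x : ℕ) : zz t ^ x = zz t ^ (x % 2 ^ t) := by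
  conv_lhs => rw [← Nat.mod_add_div x (2 ^ t)]
  rw [pow_add, pow_mul, zq, one_pow, mul_one]

lemma two_pow_lt (t : ℕ) (ht : 1 ≤ t) : (1 : ℕ) < 2 ^ t := by
  have : 2 ^ 1 ≤ 2 ^ t := Nat.pow_le_pow_right (by norm_num) ht
  omega

lemma lam_ne (t : ℕ) (ht : 1 ≤ t) : lam t ≠ 0 := by
  have h1 : zz t ≠ 1 := (hprim t).ne_one (two_pow_lt t ht)
  exact sub_ne_zero.mpr fun h => h1 h.symm

lemma one_sub_zpow_ne (t b : ℕ) (hb0 : 0 < b) (hbt : b < 2 ^ t) :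
    (1 : ℂ) - zz t ^ b ≠ 0 :=
  sub_ne_zero.mpr fun h => (hprim t).pow_ne_one_of_pos_of_lt hb0.ne' hbt h.symm

lemma one_sub_pow_eq (w : ℂ) (k : ℕ) :
    1 - w ^ k = (1 - w) * ∑ i ∈ Finset.range k, w ^ i := by
  have h := geom_sum_mul w k
  linear_combination h

lemma rd_one_sub_pow (t b k : ℕ) : RD t (1 - zz t ^ b) (1 - zz t ^ (b * k)) :=
  ⟨∑ i ∈ Finset.range k, (zz t ^ b) ^ i,
   sum_mem fun i _ => pow_mem (zpow_mem t b) i,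
   by rw [pow_mul]; exact one_sub_pow_eq _ k⟩

lemma rd_one_sub_pow' (t b k : ℕ) (ht : 1 ≤ t) (hk : Odd k) :
    RD t (1 - zz t ^ (b * k)) (1 - zz t ^ b) := by
  have hco : Nat.Coprime k (2 ^ t) := Nat.Coprime.pow_right t (Nat.coprime_two_right.mpr hk)
  obtain ⟨k', -, hk'⟩ := Nat.exists_mul_mod_eq_one_of_coprime hco (two_pow_lt t ht)
  have hdm : k * k' = 2 ^ t * (k * k' / 2 ^ t) + 1 := by
    conv_lhs => rw [← Nat.div_add_mod (k * k') (2 ^ t)]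
    rw [hk']
  have key : zz t ^ (b * k * k') = zz t ^ b := by
    rw [mul_assoc, hdm, Nat.mul_add, Nat.mul_one, pow_add]
    rw [show b * (2 ^ t * (k * k' / 2 ^ t)) = 2 ^ t * (b * (k * k' / 2 ^ t)) by ring]
    rw [pow_mul, zq, one_pow, one_mul]
  have h := rd_one_sub_pow t (b * k) k'
  rwa [key] at h

lemma unit_of_mutual (t : ℕ) {x y : ℂ} (hx : x ≠ 0) (h1 : RD t x y) (h2 : RD t y x) :
    ∃ g g', g ∈ R t ∧ g' ∈ R t ∧ g * g' = 1 ∧ y = x * g := by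
  obtain ⟨g, hg, hyg⟩ := h1
  obtain ⟨g', hg', hxg⟩ := h2
  refine ⟨g, g', hg, hg', ?_, hyg⟩
  apply mul_left_cancel₀ hx
  rw [mul_one]
  calc x * (g * g') = (x * g) * g' := by ring
    _ = y * g' := by rw [← hyg]
    _ = x := hxg.symm

lemma z_half (t : ℕ) (ht : 1 ≤ t) : zz t ^ (2 ^ (t - 1)) = -1 := by
  have hsq : (zz t ^ 2 ^ (t - 1)) ^ 2 = 1 := by
    rw [← pow_mul]
    have h : 2 ^ (t - 1) * 2 = 2 ^ t := by
      rw [← pow_succ]; congr 1; omega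
    rw [h, zq]
  have hne : zz t ^ 2 ^ (t - 1) ≠ 1 :=
    (hprim t).pow_ne_one_of_pos_of_lt (by positivity)
      (Nat.pow_lt_pow_right (by norm_num) (by omega))
  have hfac : (zz t ^ 2 ^ (t - 1) - 1) * (zz t ^ 2 ^ (t - 1) + 1) = 0 := by
    linear_combination hsq
  rcases mul_eq_zero.mp hfac with h | h
  · exact absurd (by linear_combination h) hne
  · linear_combination h

lemma two_assoc (t : ℕ) (ht : 1 ≤ t) :
    ∃ u u', u ∈ R t ∧ u' ∈ R t ∧ u * u' = 1 ∧ (2 : ℂ) = lam t ^ 2 ^ (t - 1) * u := by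
  have key : ∀ j, j ≤ t - 1 →
      ∃ u u', u ∈ R t ∧ u' ∈ R t ∧ u * u' = 1 ∧ 1 - zz t ^ 2 ^ j = lam t ^ 2 ^ j * u := by
    intro j
    induction j with
    | zero =>
      intro _
      exact ⟨1, 1, one_mem _, one_mem _, one_mul 1, by simp [lam_def]⟩
    | succ j ih =>
      intro hj
      obtain ⟨u, u', hu, hu', huu, he⟩ := ih (by omega)
      set k : ℕ := 2 ^ (t - 1 - j) + 1 with hkdef
      have hkodd : Odd k := by
        rw [hkdef]
        exact Even.add_one ((Nat.even_pow).mpr ⟨even_two, by omega⟩)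
      have hplus : 1 + zz t ^ 2 ^ j = 1 - zz t ^ (2 ^ j * k) := by
        have h1 : 2 ^ j * k = 2 ^ (t - 1) + 2 ^ j := by
          rw [hkdef, Nat.mul_add, Nat.mul_one, ← Nat.pow_add]
          congr 2
          omega
        rw [h1, pow_add, z_half t ht]
        ring
      have hne : (1 : ℂ) - zz t ^ 2 ^ j ≠ 0 :=
        one_sub_zpow_ne t (2 ^ j) (by positivity)
          (Nat.pow_lt_pow_right (by norm_num) (by omega))
      obtain ⟨g, g', hg, hg', hgg, hge⟩ :=
        unit_of_mutual t hne (rd_one_sub_pow t (2 ^ j) k) (rd_one_sub_pow' t (2 ^ j) k ht hkodd)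
      refine ⟨u * u * g, u' * u' * g',
        mul_mem (mul_mem hu hu) hg, mul_mem (mul_mem hu' hu') hg', ?_, ?_⟩
      · calc (u * u * g) * (u' * u' * g') = (u * u') * (u * u') * (g * g') := by ring
          _ = 1 := by rw [huu, hgg]; ring
      · have hsq : 1 - zz t ^ 2 ^ (j + 1) = (1 - zz t ^ 2 ^ j) * (1 + zz t ^ 2 ^ j) := by
          rw [show (2:ℕ) ^ (j + 1) = 2 ^ j * 2 from pow_succ 2 j, pow_mul]
          ring
        rw [hsq, hplus, hge, he,
          show (2:ℕ) ^ (j + 1) = 2 ^ j * 2 from pow_succ 2 j, pow_mul]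
        ring
  obtain ⟨u, u', hu, hu', huu, he⟩ := key (t - 1) le_rfl
  refine ⟨u, u', hu, hu', huu, ?_⟩
  rw [← he, z_half t ht]
  ring

lemma lam_dvd_two (t : ℕ) (ht : 1 ≤ t) : RD t (lam t) 2 := by
  obtain ⟨u, u', hu, hu', huu, he⟩ := two_assoc t ht
  refine ⟨lam t ^ (2 ^ (t - 1) - 1) * u, mul_mem (pow_mem (lam_mem t) _) hu, ?_⟩
  have hp : lam t ^ (2 ^ (t-1)) = lam t * lam t ^ (2 ^ (t-1) - 1) := by
    conv_lhs => rw [show (2:ℕ) ^ (t-1) = 1 + (2 ^ (t-1) - 1) from by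
      have : (0:ℕ) < 2 ^ (t-1) := by positivity
      omega]
    rw [pow_add, pow_one]
  rw [he, hp]
  ring

lemma approx_int (t : ℕ) {x : ℂ} (hx : x ∈ R t) : ∃ z : ℤ, RD t (lam t) (x - z) := by
  induction hx using Subring.closure_induction with
  | mem a ha =>
    rw [Set.mem_singleton_iff] at ha
    subst ha
    refine ⟨1, -1, neg_mem (one_mem _), ?_⟩
    push_cast
    rw [lam_def]
    ring
  | zero => exact ⟨0, 0, zero_mem _, by push_cast; ring⟩
  | one => exact ⟨1, 0, zero_mem _, by push_cast; ring⟩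
  | add a b ha hb iha ihb =>
    obtain ⟨z1, k1, hk1, e1⟩ := iha
    obtain ⟨z2, k2, hk2, e2⟩ := ihb
    exact ⟨z1 + z2, k1 + k2, add_mem hk1 hk2, by push_cast; linear_combination e1 + e2⟩
  | neg a ha iha =>
    obtain ⟨z1, k1, hk1, e1⟩ := iha
    exact ⟨-z1, -k1, neg_mem hk1, by push_cast; linear_combination -e1⟩
  | mul a b ha hb iha ihb =>
    obtain ⟨z1, k1, hk1, e1⟩ := iha
    obtain ⟨z2, k2, hk2, e2⟩ := ihb
    refine ⟨z1 * z2, a * k2 + (z2 : ℂ) * k1,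
      add_mem (mul_mem ha hk2) (mul_mem (intCast_mem (R t) z2) hk1), ?_⟩
    push_cast
    linear_combination a * e2 + (z2 : ℂ) * e1

lemma mod2 (t : ℕ) (ht : 1 ≤ t) {x : ℂ} (hx : x ∈ R t) :
    RD t (lam t) x ∨ RD t (lam t) (x - 1) := by
  obtain ⟨z, k, hk, he⟩ := approx_int t hx
  obtain ⟨d, hd, hde⟩ := lam_dvd_two t ht
  rcases Int.even_or_odd z with ⟨v, hv⟩ | ⟨v, hv⟩
  · left
    refine ⟨k + (v : ℂ) * d, add_mem hk (mul_mem (intCast_mem (R t) v) hd), ?_⟩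
    have hzw : ((z : ℤ) : ℂ) = 2 * (v : ℂ) := by rw [hv]; push_cast; ring
    linear_combination he + (v : ℂ) * hde + hzw
  · right
    refine ⟨k + (v : ℂ) * d, add_mem hk (mul_mem (intCast_mem (R t) v) hd), ?_⟩
    have hzw : ((z : ℤ) : ℂ) = 2 * (v : ℂ) + 1 := by rw [hv]; push_cast; ring
    linear_combination he + (v : ℂ) * hde + hzw

lemma R_integral (t : ℕ) {x : ℂ} (hx : x ∈ R t) : IsIntegral ℤ x := by
  induction hx using Subring.closure_induction with
  | mem a ha =>
    rw [Set.mem_singleton_iff] at ha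
    subst ha
    exact (hprim t).isIntegral (by positivity)
  | zero => exact isIntegral_zero
  | one => exact isIntegral_one
  | add a b _ _ h1 h2 => exact h1.add h2
  | neg a _ h1 => exact h1.neg
  | mul a b _ _ h1 h2 => exact h1.mul h2

lemma lam_not_unit (t : ℕ) (ht : 1 ≤ t) : ¬ RD t (lam t) 1 := by
  rintro ⟨v, hv, hv1⟩
  obtain ⟨u, u', hu, hu', huu, he⟩ := two_assoc t ht
  have hhalf : (2 : ℂ) * (v ^ 2 ^ (t - 1) * u') = 1 := by
    rw [he]
    calc lam t ^ 2 ^ (t-1) * u * (v ^ 2 ^ (t-1) * u')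
        = (lam t * v) ^ 2 ^ (t-1) * (u * u') := by rw [mul_pow]; ring
      _ = 1 := by rw [← hv1, huu]; ring
  have hmem : v ^ 2 ^ (t - 1) * u' ∈ R t := mul_mem (pow_mem hv _) hu'
  have hint : IsIntegral ℤ (v ^ 2 ^ (t - 1) * u' : ℂ) := R_integral t hmem
  have heq : (v ^ 2 ^ (t - 1) * u' : ℂ) = algebraMap ℚ ℂ (1 / 2) := by
    rw [eq_ratCast (algebraMap ℚ ℂ) (1/2)]
    push_cast
    have h2 : (2:ℂ) ≠ 0 := two_ne_zero
    field_simp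
    linear_combination hhalf
  rw [heq, isIntegral_algebraMap_iff (algebraMap ℚ ℂ).injective] at hint
  obtain ⟨z, hz⟩ := IsIntegrallyClosed.isIntegral_iff.mp hint
  have hzq : (z : ℚ) = 1 / 2 := by exact_mod_cast hz
  have h2 : ((2 * z : ℤ) : ℚ) = ((1 : ℤ) : ℚ) := by push_cast; rw [hzq]; ring
  have h3 : (2 * z : ℤ) = 1 := by exact_mod_cast h2
  omega

lemma lam_prime (t : ℕ) (ht : 1 ≤ t) {x y : ℂ} (hx : x ∈ R t) (hy : y ∈ R t)
    (h : RD t (lam t) (x * y)) : RD t (lam t) x ∨ RD t (lam t) y := by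
  by_contra hc
  push_neg at hc
  obtain ⟨k1, hk1, e1⟩ := (mod2 t ht hx).resolve_left hc.1
  obtain ⟨k2, hk2, e2⟩ := (mod2 t ht hy).resolve_left hc.2
  obtain ⟨k, hk, e⟩ := h
  exact lam_not_unit t ht ⟨k - x * k2 - k1,
    sub_mem (sub_mem hk (mul_mem hx hk2)) hk1,
    by linear_combination e - x * e2 - e1⟩

lemma extract (t : ℕ) (ht : 1 ≤ t) :
    ∀ (E : ℕ) (x y : ℂ), x ∈ R t → y ∈ R t → x * y = lam t ^ E →
    ∃ i, i ≤ E ∧ ∃ v v', v ∈ R t ∧ v' ∈ R t ∧ v * v' = 1 ∧ x = lam t ^ i * v := by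
  intro E
  induction E with
  | zero =>
    intro x y hx hy h
    exact ⟨0, le_rfl, x, y, hx, hy, by simpa using h, by simp⟩
  | succ E ih =>
    intro x y hx hy h
    have hdvd : RD t (lam t) (x * y) :=
      ⟨lam t ^ E, pow_mem (lam_mem t) E, by rw [h, pow_succ]; ring⟩
    have hl : lam t ≠ 0 := lam_ne t ht
    rcases lam_prime t ht hx hy hdvd with ⟨x1, hx1, ex⟩ | ⟨y1, hy1, ey⟩
    · have hxy : x1 * y = lam t ^ E := by
        apply mul_left_cancel₀ hl
        rw [show lam t * (x1 * y) = (lam t * x1) * y from by ring, ← ex, h, pow_succ]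
        ring
      obtain ⟨i, hi, v, v', hv, hv', hvv, hev⟩ := ih x1 y hx1 hy hxy
      exact ⟨i + 1, by omega, v, v', hv, hv', hvv, by rw [ex, hev, pow_succ]; ring⟩
    · have hxy : x * y1 = lam t ^ E := by
        apply mul_left_cancel₀ hl
        rw [show lam t * (x * y1) = x * (lam t * y1) from by ring, ← ey, h, pow_succ]
        ring
      obtain ⟨i, hi, v, v', hv, hv', hvv, hev⟩ := ih x y1 hx hy1 hxy
      exact ⟨i, by omega, v, v', hv, hv', hvv, hev⟩

lemma z_ne (t : ℕ) : zz t ≠ 0 := (hprim t).ne_zero (by positivity)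

lemma abs_z (t : ℕ) : ‖zz t‖ = 1 := by
  have h : ‖zz t‖ ^ (2 ^ t) = 1 := by
    rw [← norm_pow, zq, norm_one]
  have h0 : 0 ≤ ‖zz t‖ := norm_nonneg _
  have hq0 : (2:ℕ) ^ t ≠ 0 := (pow_pos (by norm_num : (0:ℕ) < 2) t).ne'
  by_contra hne
  rcases lt_or_gt_of_ne hne with hlt | hgt
  · have hc := pow_lt_one₀ h0 hlt hq0
    rw [h] at hc
    exact lt_irrefl 1 hc
  · have hc := one_lt_pow₀ hgt hq0
    rw [h] at hc
    exact lt_irrefl 1 hc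

lemma conj_z (t : ℕ) : (starRingEnd ℂ) (zz t) = zz t ^ (2 ^ t - 1) := by
  have h1 : zz t * zz t ^ (2 ^ t - 1) = 1 := by
    rw [← pow_succ']
    have h2 : 2 ^ t - 1 + 1 = 2 ^ t := by
      have : (0:ℕ) < 2 ^ t := by positivity
      omega
    rw [h2, zq]
  apply mul_left_cancel₀ (z_ne t)
  rw [h1, Complex.mul_conj, Complex.normSq_eq_norm_sq, abs_z]
  norm_num

lemma conj_mem (t : ℕ) {x : ℂ} (hx : x ∈ R t) : (starRingEnd ℂ) x ∈ R t := by
  induction hx using Subring.closure_induction with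
  | mem a ha =>
    rw [Set.mem_singleton_iff] at ha
    subst ha
    rw [conj_z]
    exact zpow_mem t _
  | zero => simpa using zero_mem (R t)
  | one => simpa using one_mem (R t)
  | add a b _ _ h1 h2 => rw [map_add]; exact add_mem h1 h2
  | neg a _ h1 => rw [map_neg]; exact neg_mem h1
  | mul a b _ _ h1 h2 => rw [map_mul]; exact mul_mem h1 h2

lemma conj_lam (t : ℕ) (ht : 1 ≤ t) :
    ∃ d d', d ∈ R t ∧ d' ∈ R t ∧ d * d' = 1 ∧ (starRingEnd ℂ) (lam t) = lam t * d := by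
  have hodd : Odd (2 ^ t - 1) := by
    have he : Even (2 ^ t) := (Nat.even_pow).mpr ⟨even_two, by omega⟩
    have h1 : (1:ℕ) ≤ 2 ^ t := Nat.one_le_two_pow
    exact Nat.Even.sub_odd h1 he odd_one
  have h1 : RD t (lam t) (1 - zz t ^ (2 ^ t - 1)) := by
    have h := rd_one_sub_pow t 1 (2 ^ t - 1)
    rw [pow_one, one_mul, ← lam_def] at h
    exact h
  have h2 : RD t (1 - zz t ^ (2 ^ t - 1)) (lam t) := by
    have h := rd_one_sub_pow' t 1 (2 ^ t - 1) ht hodd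
    rw [pow_one, one_mul, ← lam_def] at h
    exact h
  obtain ⟨d, d', hd, hd', hdd, hde⟩ := unit_of_mutual t (lam_ne t ht) h1 h2
  refine ⟨d, d', hd, hd', hdd, ?_⟩
  have hc : (starRingEnd ℂ) (lam t) = 1 - zz t ^ (2 ^ t - 1) := by
    rw [lam_def, map_sub, map_one, conj_z]
  rw [hc]
  exact hde

lemma key (t : ℕ) (ht : 1 ≤ t) (h : ℕ) (H : ℂ) (hmem : H ∈ R t)
    (habs : H * (starRingEnd ℂ) H = 2 ^ (2 * h)) :
    ∃ w w', w ∈ R t ∧ w' ∈ R t ∧ w * w' = 1 ∧ H = 2 ^ h * w := by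
  obtain ⟨u, u', hu, hu', huu, h2e⟩ := two_assoc t ht
  set s : ℕ := 2 ^ (t - 1) with hs
  have hl : lam t ≠ 0 := lam_ne t ht
  have hls : lam t ^ s = 2 * u' := by
    calc lam t ^ s = lam t ^ s * (u * u') := by rw [huu, mul_one]
      _ = (lam t ^ s * u) * u' := by ring
      _ = 2 * u' := by rw [← h2e]
  have hmp : lam t ^ (s * (2 * h)) = (lam t ^ s) ^ (2 * h) := pow_mul _ _ _
  have hlam2h : lam t ^ (s * (2 * h)) = 2 ^ (2 * h) * u' ^ (2 * h) := by
    rw [hmp, hls, mul_pow]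
  have hprod : H * ((starRingEnd ℂ) H * u' ^ (2 * h)) = lam t ^ (s * (2 * h)) := by
    rw [hlam2h]
    calc H * ((starRingEnd ℂ) H * u' ^ (2 * h)) = (H * (starRingEnd ℂ) H) * u' ^ (2 * h) := by
          ring
      _ = 2 ^ (2 * h) * u' ^ (2 * h) := by rw [habs]
  obtain ⟨i, hi, v, v', hv, hv', hvv, hev⟩ :=
    extract t ht (s * (2 * h)) H ((starRingEnd ℂ) H * u' ^ (2 * h)) hmem
      (mul_mem (conj_mem t hmem) (pow_mem hu' _)) hprod
  have hvne : v ≠ 0 := by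
    intro h0
    rw [h0, zero_mul] at hvv
    exact zero_ne_one hvv
  have hpw : lam t ^ i * lam t ^ (s * (2 * h) - i) = lam t ^ (s * (2 * h)) := by
    rw [← pow_add]
    congr 1
    omega
  have hHconj : (starRingEnd ℂ) H = lam t ^ (s * (2 * h) - i) * (v' * u ^ (2 * h)) := by
    have e1 : (lam t ^ i * v) * (lam t ^ (s * (2 * h) - i) * (v' * u ^ (2 * h)))
        = 2 ^ (2 * h) := by
      calc (lam t ^ i * v) * (lam t ^ (s * (2 * h) - i) * (v' * u ^ (2 * h)))
          = (lam t ^ i * lam t ^ (s * (2 * h) - i)) * ((v * v') * u ^ (2 * h)) := by ring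
        _ = lam t ^ (s * (2 * h)) * (1 * u ^ (2 * h)) := by rw [hpw, hvv]
        _ = (lam t ^ s) ^ (2 * h) * u ^ (2 * h) := by rw [← hmp, one_mul]
        _ = (lam t ^ s * u) ^ (2 * h) := by rw [mul_pow]
        _ = 2 ^ (2 * h) := by rw [← h2e]
    have hc : (lam t ^ i * v) * ((starRingEnd ℂ) H)
        = (lam t ^ i * v) * (lam t ^ (s * (2 * h) - i) * (v' * u ^ (2 * h))) := by
      rw [e1, ← hev]
      exact habs
    exact mul_left_cancel₀ (mul_ne_zero (pow_ne_zero _ hl) hvne) hc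
  obtain ⟨d, d', hd, hd', hdd, hdl⟩ := conj_lam t ht
  have hHconj2 : (starRingEnd ℂ) H = lam t ^ i * (d ^ i * (starRingEnd ℂ) v) := by
    rw [hev, map_mul, map_pow, hdl, mul_pow]
    ring
  have hBC : lam t ^ (s * (2 * h) - i) * (v' * u ^ (2 * h))
      = lam t ^ i * (d ^ i * (starRingEnd ℂ) v) := by
    rw [← hHconj, hHconj2]
  have hBunit : (v' * u ^ (2 * h)) * (v * u' ^ (2 * h)) = 1 := by
    calc (v' * u ^ (2 * h)) * (v * u' ^ (2 * h)) = (v * v') * (u * u') ^ (2 * h) := by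
          rw [mul_pow]; ring
      _ = 1 := by rw [hvv, huu, one_pow, mul_one]
  have hCunit : (d ^ i * (starRingEnd ℂ) v) * (d' ^ i * (starRingEnd ℂ) v') = 1 := by
    calc (d ^ i * (starRingEnd ℂ) v) * (d' ^ i * (starRingEnd ℂ) v')
        = (d * d') ^ i * ((starRingEnd ℂ) v * (starRingEnd ℂ) v') := by rw [mul_pow]; ring
      _ = 1 := by rw [hdd, ← map_mul, hvv, map_one, one_pow, one_mul]
  have hBmem : (v' * u ^ (2 * h)) ∈ R t := mul_mem hv' (pow_mem hu _)
  have hCmem : (d ^ i * (starRingEnd ℂ) v) ∈ R t := mul_mem (pow_mem hd _) (conj_mem t hv)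
  have hBimem : (v * u' ^ (2 * h)) ∈ R t := mul_mem hv (pow_mem hu' _)
  have hCimem : (d' ^ i * (starRingEnd ℂ) v') ∈ R t := mul_mem (pow_mem hd' _) (conj_mem t hv')
  have hieq : 2 * i = s * (2 * h) := by
    by_contra hne2
    rcases Nat.lt_or_ge i (s * (2 * h) - i) with hlt | hge
    · have hpw2 : lam t ^ (s * (2 * h) - i)
          = lam t ^ i * lam t ^ (s * (2 * h) - 2 * i) := by
        rw [← pow_add]
        congr 1
        omega
      have hstep : lam t ^ i * (lam t ^ (s * (2 * h) - 2 * i) * (v' * u ^ (2 * h)))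
          = lam t ^ i * (d ^ i * (starRingEnd ℂ) v) := by
        rw [← hBC, hpw2]
        ring
      have hC : (d ^ i * (starRingEnd ℂ) v)
          = lam t ^ (s * (2 * h) - 2 * i) * (v' * u ^ (2 * h)) :=
        (mul_left_cancel₀ (pow_ne_zero _ hl) hstep).symm
      apply lam_not_unit t ht
      have hp : lam t ^ (s * (2 * h) - 2 * i)
          = lam t * lam t ^ (s * (2 * h) - 2 * i - 1) := by
        rw [← pow_succ']
        congr 1
        omega
      refine ⟨lam t ^ (s * (2 * h) - 2 * i - 1) * (v' * u ^ (2 * h)) * (d' ^ i * (starRingEnd ℂ) v'),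
        mul_mem (mul_mem (pow_mem (lam_mem t) _) hBmem) hCimem, ?_⟩
      calc (1:ℂ) = (d ^ i * (starRingEnd ℂ) v) * (d' ^ i * (starRingEnd ℂ) v') := hCunit.symm
        _ = lam t ^ (s * (2 * h) - 2 * i) * (v' * u ^ (2 * h)) * (d' ^ i * (starRingEnd ℂ) v') := by
            rw [hC]
        _ = lam t * (lam t ^ (s * (2 * h) - 2 * i - 1) * (v' * u ^ (2 * h)) * (d' ^ i * (starRingEnd ℂ) v')) := by
            rw [hp]; ring
    · have hpw2 : lam t ^ i
          = lam t ^ (s * (2 * h) - i) * lam t ^ (2 * i - s * (2 * h)) := by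
        rw [← pow_add]
        congr 1
        omega
      have hstep : lam t ^ (s * (2 * h) - i) * (v' * u ^ (2 * h))
          = lam t ^ (s * (2 * h) - i) * (lam t ^ (2 * i - s * (2 * h)) * (d ^ i * (starRingEnd ℂ) v)) := by
        rw [hBC, hpw2]
        ring
      have hB : (v' * u ^ (2 * h))
          = lam t ^ (2 * i - s * (2 * h)) * (d ^ i * (starRingEnd ℂ) v) :=
        mul_left_cancel₀ (pow_ne_zero _ hl) hstep
      apply lam_not_unit t ht
      have hp : lam t ^ (2 * i - s * (2 * h))
          = lam t * lam t ^ (2 * i - s * (2 * h) - 1) := by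
        rw [← pow_succ']
        congr 1
        omega
      refine ⟨lam t ^ (2 * i - s * (2 * h) - 1) * (d ^ i * (starRingEnd ℂ) v) * (v * u' ^ (2 * h)),
        mul_mem (mul_mem (pow_mem (lam_mem t) _) hCmem) hBimem, ?_⟩
      calc (1:ℂ) = (v' * u ^ (2 * h)) * (v * u' ^ (2 * h)) := hBunit.symm
        _ = lam t ^ (2 * i - s * (2 * h)) * (d ^ i * (starRingEnd ℂ) v) * (v * u' ^ (2 * h)) := by
            rw [hB]
        _ = lam t * (lam t ^ (2 * i - s * (2 * h) - 1) * (d ^ i * (starRingEnd ℂ) v) * (v * u' ^ (2 * h))) := by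
            rw [hp]; ring
  have hieq' : i = s * h := by
    have hM : s * (2 * h) = 2 * (s * h) := by ring
    omega
  refine ⟨u' ^ h * v, u ^ h * v', mul_mem (pow_mem hu' h) hv, mul_mem (pow_mem hu h) hv', ?_, ?_⟩
  · calc (u' ^ h * v) * (u ^ h * v') = (u * u') ^ h * (v * v') := by rw [mul_pow]; ring
      _ = 1 := by rw [huu, hvv, one_pow, mul_one]
  · rw [hev, hieq']
    calc lam t ^ (s * h) * v = (lam t ^ s) ^ h * v := by rw [← pow_mul]
      _ = (2 * u') ^ h * v := by rw [hls]
      _ = 2 ^ h * (u' ^ h * v) := by rw [mul_pow]; ring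

lemma RD_add (t : ℕ) {a b : ℂ} (ha : RD t (lam t) a) (hb : RD t (lam t) b) :
    RD t (lam t) (a + b) := by
  obtain ⟨k1, h1, e1⟩ := ha
  obtain ⟨k2, h2, e2⟩ := hb
  exact ⟨k1 + k2, add_mem h1 h2, by rw [e1, e2]; ring⟩

lemma RD_sum (t : ℕ) {α : Type*} [DecidableEq α] (s : Finset α) (f : α → ℂ) :
    (∀ c ∈ s, RD t (lam t) (f c)) → RD t (lam t) (∑ c ∈ s, f c) := by
  induction s using Finset.induction_on with
  | empty => exact fun _ => ⟨0, zero_mem _, by simp⟩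
  | insert _ _ hns ih =>
    intro hf
    rw [Finset.sum_insert hns]
    exact RD_add t (hf _ (Finset.mem_insert_self _ _))
      (ih fun c hc => hf c (Finset.mem_insert_of_mem hc))

lemma e_add (t : ℕ) (a b : ZMod (2 ^ t)) :
    zz t ^ (a + b).val = zz t ^ a.val * zz t ^ b.val := by
  haveI : NeZero (2 ^ t) := ⟨(pow_pos (by norm_num : (0:ℕ) < 2) t).ne'⟩
  rw [ZMod.val_add, ← zpow_mod, pow_add]

lemma e_sum (t : ℕ) {m : ℕ} (g : Fin m → ZMod (2 ^ t)) :
    zz t ^ (∑ j, g j).val = ∏ j, zz t ^ (g j).val := by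
  haveI : NeZero (2 ^ t) := ⟨(pow_pos (by norm_num : (0:ℕ) < 2) t).ne'⟩
  have key : ∀ s : Finset (Fin m), zz t ^ (∑ j ∈ s, g j).val = ∏ j ∈ s, zz t ^ (g j).val := by
    intro s
    induction s using Finset.induction_on with
    | empty => simp [ZMod.val_zero]
    | insert _ _ hns ih =>
      rw [Finset.sum_insert hns, Finset.prod_insert hns, e_add, ih]
  exact key Finset.univ

lemma orth1 (t : ℕ) (ht : 1 ≤ t) (d : ZMod (2 ^ t)) :
    ∑ a : ZMod (2 ^ t), zz t ^ (a * d).val = if d = 0 then ((2 ^ t : ℕ) : ℂ) else 0 := by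
  haveI : NeZero (2 ^ t) := ⟨(pow_pos (by norm_num : (0:ℕ) < 2) t).ne'⟩
  by_cases hd : d = 0
  · subst hd
    rw [if_pos rfl]
    have h1 : ∀ a : ZMod (2 ^ t), zz t ^ (a * 0).val = 1 := by
      intro a
      rw [mul_zero, ZMod.val_zero, pow_zero]
    rw [Finset.sum_congr rfl fun a _ => h1 a, Finset.sum_const, Finset.card_univ, ZMod.card]
    simp
  · rw [if_neg hd]
    have hstep : ∀ a : ZMod (2 ^ t), zz t ^ (a * d).val = (zz t ^ d.val) ^ a.val := by
      intro a
      rw [ZMod.val_mul, ← zpow_mod, ← pow_mul, Nat.mul_comm]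
    rw [Finset.sum_congr rfl fun a _ => hstep a]
    have hre : ∑ a : ZMod (2 ^ t), (zz t ^ d.val) ^ a.val
        = ∑ i ∈ Finset.range (2 ^ t), (zz t ^ d.val) ^ i := by
      apply Finset.sum_nbij' (fun a : ZMod (2 ^ t) => a.val) (fun i : ℕ => (i : ZMod (2 ^ t)))
      · intro a _
        exact Finset.mem_range.mpr (ZMod.val_lt a)
      · intro i _
        exact Finset.mem_univ _
      · intro a _
        exact ZMod.natCast_rightInverse a
      · intro i hi
        exact ZMod.val_cast_of_lt (Finset.mem_range.mp hi)
      · intro a _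
        rfl
    rw [hre]
    have hω : zz t ^ d.val ≠ 1 := by
      intro h1
      have hdvd : (2 ^ t : ℕ) ∣ d.val := ((hprim t).pow_eq_one_iff_dvd d.val).mp h1
      have hlt : d.val < 2 ^ t := ZMod.val_lt d
      have : d.val = 0 := Nat.eq_zero_of_dvd_of_lt hdvd hlt
      exact hd ((ZMod.val_eq_zero d).mp this)
    rw [geom_sum_eq hω]
    have hωq : (zz t ^ d.val) ^ (2 ^ t) = 1 := by
      rw [← pow_mul, Nat.mul_comm, pow_mul, zq, one_pow]
    rw [hωq]
    simp

lemma orthm (t : ℕ) (ht : 1 ≤ t) {m : ℕ} (v : Fin m → ZMod (2 ^ t)) :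
    ∑ c : Fin m → ZMod (2 ^ t), zz t ^ (∑ j, c j * v j).val
      = if v = 0 then ((2 ^ t : ℕ) : ℂ) ^ m else 0 := by
  haveI : NeZero (2 ^ t) := ⟨(pow_pos (by norm_num : (0:ℕ) < 2) t).ne'⟩
  have h1 : ∀ c : Fin m → ZMod (2 ^ t),
      zz t ^ (∑ j, c j * v j).val = ∏ j, zz t ^ (c j * v j).val :=
    fun c => e_sum t _
  rw [Finset.sum_congr rfl fun c _ => h1 c]
  rw [← Fintype.prod_sum (fun j (a : ZMod (2 ^ t)) => zz t ^ ((a * v j).val))]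
  rw [Finset.prod_congr rfl fun j _ => orth1 t ht (v j)]
  by_cases hv : v = 0
  · rw [if_pos hv]
    subst hv
    simp
  · rw [if_neg hv]
    obtain ⟨j0, hj0⟩ : ∃ j, v j ≠ 0 := by
      by_contra hc
      push_neg at hc
      exact hv (funext hc)
    exact Finset.prod_eq_zero (Finset.mem_univ j0) (if_neg hj0)

end S12

open S12

/-- if `F : 𝔽₂ⁿ → ℤ_{2^t}^m` is a vectorial gbent function
(`n > 2` even), then `m ≤ n/(2t)`, i.e. `2tm ≤ n`. -/
theorem stmt12 (n t m : ℕ) (ht : 1 ≤ t) (hn2 : 2 < n) (hne : Even n)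
    (F : (Fin n → ZMod 2) → Fin m → ZMod (2 ^ t))
    (hF : IsVectorialGbent F) :
    2 * t * m ≤ n := by
  classical
  haveI : NeZero (2 ^ t) := ⟨(pow_pos (by norm_num : (0:ℕ) < 2) t).ne'⟩
  by_contra hcon
  push_neg at hcon
  obtain ⟨h, hn⟩ : ∃ h : ℕ, n = 2 * h := by
    obtain ⟨r, hr⟩ := hne
    exact ⟨r, by omega⟩
  have hh2 : 2 ≤ h := by omega
  set M := t * m with hM
  have hcon' : n < 2 * M := by
    calc n < 2 * t * m := hcon
      _ = 2 * M := by rw [hM]; ring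
  have htm : h + 1 ≤ M := by omega
  -- the exponential sums H_c
  set Hc : (Fin m → ZMod (2 ^ t)) → ℂ :=
    fun c => ∑ x : Fin n → ZMod 2, zz t ^ ((∑ j, c j * F x j : ZMod (2 ^ t))).val with hHc
  have hgw : ∀ c : Fin m → ZMod (2 ^ t),
      gWHT (fun x => ∑ j, c j * F x j) (0 : Fin n → ZMod 2) = Hc c := by
    intro c
    rw [hHc]
    unfold gWHT
    refine Finset.sum_congr rfl fun x _ => ?_
    have h0 : ip (0 : Fin n → ZMod 2) x = 0 := by simp [ip]
    rw [h0, ZMod.val_zero, pow_zero, mul_one]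
    rfl
  have hmemH : ∀ c, Hc c ∈ R t := fun c => sum_mem fun x _ => zpow_mem t _
  have habs2 : ∀ c : Fin m → ZMod (2 ^ t), c ≠ 0 →
      Hc c * (starRingEnd ℂ) (Hc c) = 2 ^ (2 * h) := by
    intro c hc
    have h1 : ‖Hc c‖ = (2 : ℝ) ^ ((n : ℝ) / 2) := by
      rw [← hgw c]
      exact hF c hc 0
    have h2 : Hc c * (starRingEnd ℂ) (Hc c) = ((‖Hc c‖) ^ 2 : ℝ) := by
      rw [Complex.mul_conj, Complex.normSq_eq_norm_sq]
    rw [h2, h1]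
    have h3 : ((2:ℝ) ^ ((n:ℝ)/2)) ^ 2 = (2:ℝ) ^ (2*h : ℕ) := by
      rw [← Real.rpow_natCast ((2:ℝ) ^ ((n:ℝ)/2)) 2, ← Real.rpow_mul (by norm_num)]
      rw [← Real.rpow_natCast (2:ℝ) (2*h)]
      congr 1
      rw [hn]
      push_cast
      ring
    rw [h3]
    push_cast
    ring
  have hcomp : ∀ c : Fin m → ZMod (2 ^ t), ∃ w w', w ∈ R t ∧ w' ∈ R t ∧ w * w' = 1 ∧
      (c ≠ 0 → Hc c = 2 ^ h * w) := by
    intro c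
    by_cases hc : c = 0
    · exact ⟨1, 1, one_mem _, one_mem _, one_mul 1, fun h' => absurd hc h'⟩
    · obtain ⟨w, w', hw, hw', hww, hH⟩ := key t ht h (Hc c) (hmemH c) (habs2 c hc)
      exact ⟨w, w', hw, hw', hww, fun _ => hH⟩
  choose w w' hwmem hw'mem hww hwH using hcomp
  -- counting
  set N : ℕ := (Finset.univ.filter fun x : Fin n → ZMod 2 => F x = 0).card with hN
  have hcount : ∑ c : Fin m → ZMod (2 ^ t), Hc c = ((2 ^ t : ℕ) : ℂ) ^ m * N := by
    rw [hHc]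
    rw [Finset.sum_comm]
    have h1 : ∀ x : Fin n → ZMod 2,
        ∑ c : Fin m → ZMod (2 ^ t), zz t ^ ((∑ j, c j * F x j : ZMod (2 ^ t))).val
          = if F x = 0 then ((2 ^ t : ℕ) : ℂ) ^ m else 0 :=
      fun x => orthm t ht (F x)
    rw [Finset.sum_congr rfl fun x _ => h1 x, ← Finset.sum_filter, Finset.sum_const, ← hN,
      nsmul_eq_mul, mul_comm]
  have hzero : Hc 0 = (2 : ℂ) ^ n := by
    simp only [hHc]
    have h1 : ∀ x : Fin n → ZMod 2,
        ((∑ j, (0 : Fin m → ZMod (2 ^ t)) j * F x j : ZMod (2 ^ t))).val = 0 := by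
      intro x
      simp [ZMod.val_zero]
    have h2 : ∀ x : Fin n → ZMod 2,
        zz t ^ ((∑ j, (0 : Fin m → ZMod (2 ^ t)) j * F x j : ZMod (2 ^ t))).val = 1 := by
      intro x
      rw [h1 x, pow_zero]
    rw [Finset.sum_congr rfl fun x _ => h2 x, Finset.sum_const, Finset.card_univ]
    rw [Fintype.card_fun, ZMod.card, Fintype.card_fin]
    simp
  have hsum_split : (∑ c ∈ Finset.univ.erase (0 : Fin m → ZMod (2 ^ t)), Hc c) + Hc 0
      = ∑ c : Fin m → ZMod (2 ^ t), Hc c :=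
    Finset.sum_erase_add _ _ (Finset.mem_univ 0)
  have hTval : (∑ c ∈ Finset.univ.erase (0 : Fin m → ZMod (2 ^ t)), Hc c)
      = ((2 ^ t : ℕ) : ℂ) ^ m * N - 2 ^ n := by
    rw [hcount, hzero] at hsum_split
    linear_combination hsum_split
  set T : ℂ := ∑ c ∈ Finset.univ.erase (0 : Fin m → ZMod (2 ^ t)), w c with hT
  have hTH : (2:ℂ) ^ h * T = ((2 ^ t : ℕ) : ℂ) ^ m * N - 2 ^ n := by
    rw [hT, Finset.mul_sum, ← hTval]
    refine Finset.sum_congr rfl fun c hc => ?_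
    exact (hwH c (Finset.ne_of_mem_erase hc)).symm
  have hcard : (Finset.univ.erase (0 : Fin m → ZMod (2 ^ t))).card = 2 ^ M - 1 := by
    rw [Finset.card_erase_of_mem (Finset.mem_univ 0), Finset.card_univ]
    rw [Fintype.card_fun, ZMod.card, Fintype.card_fin, ← pow_mul, ← hM]
  have hw1 : ∀ c ∈ Finset.univ.erase (0 : Fin m → ZMod (2 ^ t)), RD t (lam t) (w c - 1) := by
    intro c hc
    have hnd : ¬ RD t (lam t) (w c) := by
      rintro ⟨k, hk, e⟩
      apply lam_not_unit t ht
      exact ⟨k * w' c, mul_mem hk (hw'mem c), by linear_combination w' c * e - hww c⟩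
    exact (mod2 t ht (hwmem c)).resolve_left hnd
  have hsum := RD_sum t (Finset.univ.erase (0 : Fin m → ZMod (2 ^ t))) (fun c => w c - 1) hw1
  have h2M1 : (1:ℕ) ≤ 2 ^ M := Nat.one_le_two_pow
  have hTsub : T - ((2:ℂ) ^ M - 1) = ∑ c ∈ Finset.univ.erase (0 : Fin m → ZMod (2 ^ t)), (w c - 1) := by
    rw [Finset.sum_sub_distrib, ← hT, Finset.sum_const, hcard, nsmul_eq_mul, mul_one]
    have hc : ((2 ^ M - 1 : ℕ) : ℂ) = 2 ^ M - 1 := by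
      push_cast [h2M1]
      ring
    rw [hc]
  obtain ⟨d, hd, hde⟩ := lam_dvd_two t ht
  have heven : RD t (lam t) ((2:ℂ) ^ M - 2) := by
    have h2Me : (2:ℂ) ^ M = 2 * 2 ^ (M - 1) := by
      rw [← pow_succ']
      congr 1
      omega
    have h2mem : (2:ℂ) ∈ R t := by
      have := add_mem (one_mem (R t)) (one_mem (R t))
      rwa [one_add_one_eq_two] at this
    refine ⟨d * ((2:ℂ) ^ (M - 1) - 1), mul_mem hd (sub_mem (pow_mem h2mem _) (one_mem _)), ?_⟩
    linear_combination h2Me + ((2:ℂ) ^ (M - 1) - 1) * hde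
  have hT1 : RD t (lam t) (T - 1) := by
    have hadd := RD_add t (show RD t (lam t) (T - ((2:ℂ) ^ M - 1)) from by
      rw [hTsub]; exact hsum) heven
    have heq : (T - ((2:ℂ) ^ M - 1)) + ((2:ℂ) ^ M - 2) = T - 1 := by ring
    rwa [heq] at hadd
  have hq2 : ((2 ^ t : ℕ) : ℂ) ^ m = (2:ℂ) ^ M := by
    push_cast
    rw [← pow_mul, ← hM]
  have hTH' : (2:ℂ) ^ h * T = 2 ^ h * (2 * ((2 ^ (M - h - 1) * N - 2 ^ (h - 1) : ℤ) : ℂ)) := by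
    rw [hTH, hq2]
    have e1 : (2:ℂ) ^ M = 2 ^ h * 2 * 2 ^ (M - h - 1) := by
      have he : h + 1 + (M - h - 1) = M := by omega
      calc (2:ℂ) ^ M = 2 ^ (h + 1 + (M - h - 1)) := by rw [he]
        _ = 2 ^ h * 2 * 2 ^ (M - h - 1) := by rw [pow_add, pow_add, pow_one]
    have e2 : (2:ℂ) ^ n = 2 ^ h * 2 * 2 ^ (h - 1) := by
      have he : h + 1 + (h - 1) = n := by omega
      calc (2:ℂ) ^ n = 2 ^ (h + 1 + (h - 1)) := by rw [he]
        _ = 2 ^ h * 2 * 2 ^ (h - 1) := by rw [pow_add, pow_add, pow_one]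
    push_cast
    linear_combination (N:ℂ) * e1 - e2
  have hTeq : T = 2 * ((2 ^ (M - h - 1) * N - 2 ^ (h - 1) : ℤ) : ℂ) :=
    mul_left_cancel₀ (pow_ne_zero h two_ne_zero) hTH'
  have hRT : RD t (lam t) T := by
    refine ⟨d * ((2 ^ (M - h - 1) * N - 2 ^ (h - 1) : ℤ) : ℂ),
      mul_mem hd (intCast_mem (R t) _), ?_⟩
    rw [hTeq]
    linear_combination ((2 ^ (M - h - 1) * N - 2 ^ (h - 1) : ℤ) : ℂ) * hde
  obtain ⟨k1, hk1, e1⟩ := hRT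
  obtain ⟨k2, hk2, e2⟩ := hT1
  exact lam_not_unit t ht ⟨k1 - k2, sub_mem hk1 hk2, by linear_combination e1 - e2⟩
end
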